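/- arXiv:2103.09397 — 11 statements merged into one kernel-verified Lean document; each statement's English description precedes it below -/
import Mathlib

section
/- Let Q ⊆ ℂⁿ be an open complete circular domain containing 0. Let f be holomorphic on Q with f(0) = 0 and |f(z)| < 1 for all z ∈ Q, and suppose f(z) = Σ_{k=1}^∞ P_k(z) on Q, where each P_k is a homogeneous polynomial map of degree k. Then for every w ∈ Q, Σ_{k=1}^∞ |P_k((1/√2)•w)| ≤ 1. -/
open Complex intervalIntegral Real

lemma lemA (m : ℤ) : ∫ t in (0:ℝ)..(2*π), Complex.exp (m * t * I)
    = if m = 0 then (2*π:ℂ) else 0 := by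
  rcases eq_or_ne m 0 with h | hm
  · simp [h]
  rw [if_neg hm]
  have hc : (m : ℂ) * I ≠ 0 := by simp [Complex.I_ne_zero, hm]
  have key : ∀ t : ℝ, Complex.exp ((m:ℂ) * t * I) = Complex.exp ((m:ℂ)*I * t) :=
    fun t => by ring_nf
  simp_rw [key]
  rw [integral_exp_mul_complex hc]
  have h1 : Complex.exp ((m:ℂ)*I * ((2*π:ℝ):ℂ)) = 1 := by
    rw [show ((m:ℂ)*I * ((2*π:ℝ):ℂ)) = (m:ℂ) * (2 * π * I) by push_cast; ring]
    exact Complex.exp_int_mul_two_pi_mul_I m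
  rw [h1]
  simp

lemma norm_exp_int_mul_I (m : ℤ) (t : ℝ) : ‖Complex.exp ((m:ℂ) * t * I)‖ = 1 := by
  rw [Complex.norm_exp]
  simp [Complex.mul_re, Complex.mul_im]

lemma norm_exp_real_mul_I (t : ℝ) : ‖Complex.exp ((t:ℂ) * I)‖ = 1 := by
  rw [Complex.norm_exp]
  simp

lemma lemB (c : ℕ → ℂ) (C : ℝ) (hC : ∀ k, ‖c k‖ ≤ C) (r : ℝ) (hr0 : 0 < r) (hr1 : r < 1)
    (j : ℕ) :
    ∫ t in (0:ℝ)..(2*π), (∑' k, c k * ((r:ℂ) * Complex.exp (t * I)) ^ k)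
        * Complex.exp (((-(j:ℤ) : ℤ) : ℂ) * t * I) = 2*π * (c j * (r:ℂ)^j) := by
  set F : ℕ → ℝ → ℂ := fun k t => c k * (r:ℂ)^k * Complex.exp ((((k:ℤ) - j) : ℤ) * t * I) with hF
  have hFeq : ∀ t : ℝ, (∑' k, c k * ((r:ℂ) * Complex.exp (t * I)) ^ k)
      * Complex.exp (((-(j:ℤ) : ℤ) : ℂ) * t * I) = ∑' k, F k t := by
    intro t
    rw [← tsum_mul_right]
    congr 1; funext k
    rw [hF]
    simp only [mul_pow, ← Complex.exp_nat_mul]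
    have : ((((k:ℤ) - j) : ℤ) : ℂ) * t * I = (k:ℂ) * ((t:ℂ) * I) + ((-(j:ℤ) : ℤ) : ℂ) * t * I := by
      push_cast; ring
    rw [this, Complex.exp_add]
    ring
  have hFcont : ∀ k, Continuous (F k) := by
    intro k
    apply Continuous.mul continuous_const
    exact Complex.continuous_exp.comp (by continuity)
  have hFnorm : ∀ k t, ‖F k t‖ = ‖c k‖ * r^k := by
    intro k t
    rw [hF]
    simp only [norm_mul, norm_pow, norm_exp_int_mul_I, Complex.norm_real,
      Real.norm_of_nonneg hr0.le, mul_one]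
  simp_rw [hFeq]
  rw [intervalIntegral.integral_of_le (by positivity : (0:ℝ) ≤ 2*π)]
  rw [← MeasureTheory.integral_tsum_of_summable_integral_norm]
  · have hIk : ∀ k, (∫ t in Set.Ioc (0:ℝ) (2*π), F k t)
        = c k * (r:ℂ)^k * (if ((k:ℤ) - j) = 0 then (2*π:ℂ) else 0) := by
      intro k
      rw [← intervalIntegral.integral_of_le (by positivity : (0:ℝ) ≤ 2*π)]
      rw [hF]
      simp only
      rw [intervalIntegral.integral_const_mul, lemA]
    simp_rw [hIk]
    rw [tsum_eq_single j]
    · rw [if_pos (by omega)]; ring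
    · intro k hk
      rw [if_neg (by omega), mul_zero]
  · intro k
    exact (hFcont k).integrableOn_Ioc
  · have heq : ∀ k, (∫ t in Set.Ioc (0:ℝ) (2*π), ‖F k t‖) = ‖c k‖ * r^k * (2*π) := by
      intro k
      simp_rw [hFnorm]
      rw [MeasureTheory.setIntegral_const, MeasureTheory.measureReal_def, Real.volume_Ioc,
        ENNReal.toReal_ofReal (by simp; positivity : (0:ℝ) ≤ 2*π - 0), smul_eq_mul]
      ring
    simp_rw [heq]
    apply Summable.mul_right
    exact Summable.of_nonneg_of_le (fun k => by positivity)
      (fun k => mul_le_mul_of_nonneg_right (hC k) (by positivity))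
      ((summable_geometric_of_lt_one hr0.le hr1).mul_left C)

lemma cont_exp_mul (a : ℂ) : Continuous fun t : ℝ => Complex.exp (a * (t:ℂ) * I) :=
  Complex.continuous_exp.comp ((continuous_const.mul Complex.continuous_ofReal).mul
    continuous_const)

lemma intervalIntegral_conj {f : ℝ → ℂ} {a b : ℝ} :
    ∫ t in a..b, (starRingEnd ℂ) (f t) = (starRingEnd ℂ) (∫ t in a..b, f t) := by
  simp only [intervalIntegral, integral_conj, map_sub]

set_option maxHeartbeats 1000000 in
lemma lemC (c : ℕ → ℂ) (C : ℝ) (hC : ∀ k, ‖c k‖ ≤ C)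
    (hb : ∀ ξ : ℂ, ‖ξ‖ ≤ 1 → ‖∑' k, c k * ξ^k‖ ≤ 1)
    (r : ℝ) (hr0 : 0 < r) (hr1 : r < 1) (N : ℕ) :
    ∑ j ∈ Finset.range N, ‖c j‖^2 * r^(2*j) ≤ 1 := by
  have hπ : (0:ℝ) < 2*π := by positivity
  set G : ℝ → ℂ := fun t => ∑' k, c k * ((r:ℂ) * Complex.exp (t * I)) ^ k with hGdef
  set p : ℝ → ℂ := fun t =>
    ∑ j ∈ Finset.range N, c j * (r:ℂ)^j * Complex.exp ((j:ℂ) * t * I) with hpdef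
  -- continuity of G
  have hGcont : Continuous G := by
    apply continuous_tsum (u := fun k => C * r^k)
    · intro k
      apply Continuous.mul continuous_const
      apply Continuous.pow
      exact Continuous.mul continuous_const (Complex.continuous_exp.comp (by continuity))
    · exact (summable_geometric_of_lt_one hr0.le hr1).mul_left C
    · intro k t
      rw [norm_mul, norm_pow, norm_mul, norm_exp_real_mul_I, Complex.norm_real,
        Real.norm_of_nonneg hr0.le, mul_one]
      exact mul_le_mul_of_nonneg_right (hC k) (by positivity)
  have hpcont : Continuous p := by
    apply continuous_finset_sum
    intro j _
    exact Continuous.mul continuous_const (Complex.continuous_exp.comp (by continuity))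
  -- bound on G
  have hGle : ∀ t, ‖G t‖ ≤ 1 := by
    intro t
    apply hb
    rw [norm_mul, norm_exp_real_mul_I, Complex.norm_real, Real.norm_of_nonneg hr0.le, mul_one]
    exact hr1.le
  set S : ℝ := ∑ j ∈ Finset.range N, ‖c j‖^2 * r^(2*j) with hSdef
  -- conj p expansion
  have hconjp : ∀ t : ℝ, (starRingEnd ℂ) (p t) = ∑ j ∈ Finset.range N,
      ((starRingEnd ℂ) (c j) * (r:ℂ)^j) * Complex.exp (((-(j:ℤ) : ℤ) : ℂ) * t * I) := by
    intro t
    rw [hpdef, map_sum]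
    apply Finset.sum_congr rfl
    intro j _
    rw [map_mul, map_mul, ← Complex.exp_conj]
    congr 1
    · rw [map_pow, Complex.conj_ofReal]
    · congr 1
      simp only [map_mul, Complex.conj_I, Complex.conj_ofReal, Complex.conj_natCast]
      push_cast; ring
  -- B : ∫ G * conj p
  have hB : ∫ t in (0:ℝ)..(2*π), G t * (starRingEnd ℂ) (p t) = 2*π*S := by
    have : ∀ t : ℝ, G t * (starRingEnd ℂ) (p t) = ∑ j ∈ Finset.range N,
        ((starRingEnd ℂ) (c j) * (r:ℂ)^j) *
          (G t * Complex.exp (((-(j:ℤ) : ℤ) : ℂ) * t * I)) := by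
      intro t
      rw [hconjp, Finset.mul_sum]
      congr 1; funext j
      ring
    simp_rw [this]
    rw [intervalIntegral.integral_finset_sum]
    · have : ∀ j ∈ Finset.range N,
          (∫ t in (0:ℝ)..(2*π), ((starRingEnd ℂ) (c j) * (r:ℂ)^j) *
            (G t * Complex.exp (((-(j:ℤ) : ℤ) : ℂ) * t * I)))
          = 2*π * (((‖c j‖^2 : ℝ) : ℂ) * (r:ℂ)^(2*j)) := by
        intro j _
        rw [intervalIntegral.integral_const_mul, lemB c C hC r hr0 hr1 j]
        rw [show ((‖c j‖^2 : ℝ) : ℂ) = (starRingEnd ℂ) (c j) * c j by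
          rw [show (‖c j‖^2:ℝ) = Complex.normSq (c j) by
            rw [Complex.normSq_eq_norm_sq]]
          exact Complex.normSq_eq_conj_mul_self]
        push_cast
        ring
      rw [Finset.sum_congr rfl this, hSdef]
      push_cast
      rw [Finset.mul_sum]
    · intro j _
      exact (continuous_const.mul (hGcont.mul (cont_exp_mul _))).intervalIntegrable _ _
  -- D : ∫ p * conj p
  have hD : ∫ t in (0:ℝ)..(2*π), p t * (starRingEnd ℂ) (p t) = 2*π*S := by
    have hpt : ∀ t : ℝ, p t * (starRingEnd ℂ) (p t)
        = ∑ j ∈ Finset.range N, ∑ k ∈ Finset.range N,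
          (c k * (starRingEnd ℂ) (c j) * (r:ℂ)^j * (r:ℂ)^k)
            * Complex.exp ((((k:ℤ) - (j:ℤ) : ℤ) : ℂ) * t * I) := by
      intro t
      rw [hconjp, hpdef]
      simp only [Finset.sum_mul, Finset.mul_sum]
      apply Finset.sum_congr rfl
      intro j _
      apply Finset.sum_congr rfl
      intro k _
      rw [show ((((k:ℤ) - (j:ℤ) : ℤ) : ℂ)) * t * I
          = (k:ℂ) * t * I + (((-(j:ℤ)) : ℤ) : ℂ) * t * I by push_cast; ring,
        Complex.exp_add]
      ring
    simp_rw [hpt]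
    rw [intervalIntegral.integral_finset_sum]
    swap
    · intro j _
      apply Continuous.intervalIntegrable
      apply continuous_finset_sum
      intro k _
      exact continuous_const.mul (cont_exp_mul _)
    have : ∀ j ∈ Finset.range N,
        (∫ t in (0:ℝ)..(2*π), ∑ k ∈ Finset.range N,
          (c k * (starRingEnd ℂ) (c j) * (r:ℂ)^j * (r:ℂ)^k)
            * Complex.exp ((((k:ℤ) - (j:ℤ) : ℤ) : ℂ) * t * I))
        = 2*π * (((‖c j‖^2 : ℝ) : ℂ) * (r:ℂ)^(2*j)) := by
      intro j hj
      rw [intervalIntegral.integral_finset_sum]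
      swap
      · intro k _
        exact (continuous_const.mul (cont_exp_mul _)).intervalIntegrable _ _
      have : ∀ k ∈ Finset.range N,
          (∫ t in (0:ℝ)..(2*π), (c k * (starRingEnd ℂ) (c j) * (r:ℂ)^j * (r:ℂ)^k)
            * Complex.exp ((((k:ℤ) - (j:ℤ) : ℤ) : ℂ) * t * I))
          = if (k:ℤ) - (j:ℤ) = 0 then
              (c k * (starRingEnd ℂ) (c j) * (r:ℂ)^j * (r:ℂ)^k) * (2*π:ℂ) else 0 := by
        intro k _
        rw [intervalIntegral.integral_const_mul, lemA ((k:ℤ) - (j:ℤ))]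
        split_ifs
        · rfl
        · rw [mul_zero]
      rw [Finset.sum_congr rfl this]
      rw [Finset.sum_eq_single j]
      · rw [if_pos (by omega)]
        rw [show ((‖c j‖^2 : ℝ) : ℂ) = c j * (starRingEnd ℂ) (c j) by
          rw [show (‖c j‖^2:ℝ) = Complex.normSq (c j) by
            rw [Complex.normSq_eq_norm_sq]]
          rw [Complex.normSq_eq_conj_mul_self]; ring]
        push_cast
        ring
      · intro k _ hk
        rw [if_neg (by omega)]
      · intro h; exact absurd hj h
    rw [Finset.sum_congr rfl this, hSdef]
    push_cast
    rw [Finset.mul_sum]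
  -- A : ∫ G * conj G  has re ≤ 2π
  have hGG : ∀ (f : ℝ → ℂ), (∀ t, f t * (starRingEnd ℂ) (f t) = ((Complex.normSq (f t) : ℝ) : ℂ)) :=
    fun f t => (Complex.mul_conj (f t))
  have hA : (∫ t in (0:ℝ)..(2*π), G t * (starRingEnd ℂ) (G t)).re ≤ 2*π := by
    simp_rw [hGG G]
    rw [intervalIntegral.integral_ofReal]
    rw [Complex.ofReal_re]
    calc ∫ t in (0:ℝ)..(2*π), Complex.normSq (G t)
        ≤ ∫ t in (0:ℝ)..(2*π), (1:ℝ) := by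
          apply intervalIntegral.integral_mono_on hπ.le
          · exact (Complex.continuous_normSq.comp hGcont).intervalIntegrable _ _
          · exact intervalIntegrable_const
          · intro t _
            rw [← Complex.sq_norm]
            nlinarith [hGle t, norm_nonneg (G t)]
      _ = 2*π := by simp
  -- positivity
  have hpos : 0 ≤ (∫ t in (0:ℝ)..(2*π), (G t - p t) * (starRingEnd ℂ) (G t - p t)).re := by
    simp_rw [hGG (fun t => G t - p t)]
    rw [intervalIntegral.integral_ofReal, Complex.ofReal_re]
    apply intervalIntegral.integral_nonneg hπ.le
    intro t _
    exact Complex.normSq_nonneg _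
  -- expansion
  have hexp : (∫ t in (0:ℝ)..(2*π), (G t - p t) * (starRingEnd ℂ) (G t - p t))
      = (∫ t in (0:ℝ)..(2*π), G t * (starRingEnd ℂ) (G t))
        - (2*π*S) - (starRingEnd ℂ) (2*π*S) + 2*π*S := by
    have hint : ∀ (f g : ℝ → ℂ), Continuous f → Continuous g →
        IntervalIntegrable (fun t => f t * (starRingEnd ℂ) (g t))
          MeasureTheory.volume 0 (2*π) := by
      intro f g hf hg
      have hcont : Continuous fun t => f t * (starRingEnd ℂ) (g t) :=
        hf.mul (Complex.continuous_conj.comp hg)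
      exact hcont.intervalIntegrable _ _
    have e1 : ∀ t : ℝ, (G t - p t) * (starRingEnd ℂ) (G t - p t)
        = G t * (starRingEnd ℂ) (G t) - G t * (starRingEnd ℂ) (p t)
          - p t * (starRingEnd ℂ) (G t) + p t * (starRingEnd ℂ) (p t) := by
      intro t; rw [map_sub]; ring
    simp_rw [e1]
    rw [intervalIntegral.integral_add, intervalIntegral.integral_sub,
      intervalIntegral.integral_sub]
    · rw [hB, hD]
      congr 1
      congr 1
      have : ∀ t : ℝ, p t * (starRingEnd ℂ) (G t)
          = (starRingEnd ℂ) (G t * (starRingEnd ℂ) (p t)) := by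
        intro t; rw [map_mul, Complex.conj_conj]; ring
      simp_rw [this]
      rw [intervalIntegral_conj, hB]
    · exact hint G G hGcont hGcont
    · exact hint G p hGcont hpcont
    · exact ((hint G G hGcont hGcont).sub (hint G p hGcont hpcont))
    · exact hint p G hpcont hGcont
    · exact (((hint G G hGcont hGcont).sub (hint G p hGcont hpcont)).sub (hint p G hpcont hGcont))
    · exact hint p p hpcont hpcont
  -- combine
  have hSre : ((2*π*S : ℝ) : ℂ).re = 2*π*S := Complex.ofReal_re _
  have hfinal : 0 ≤ (∫ t in (0:ℝ)..(2*π), G t * (starRingEnd ℂ) (G t)).re - 2*π*S := by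
    have := hpos
    rw [hexp] at this
    have hconjS : (starRingEnd ℂ) ((2*π*S : ℂ)) = (2*π*S : ℂ) := by
      rw [show ((2*π*S : ℂ)) = (((2*π*S : ℝ)) : ℂ) by push_cast; ring, Complex.conj_ofReal]
    rw [hconjS] at this
    simp only [Complex.sub_re, Complex.add_re] at this
    have h2 : ((2*π*S : ℂ)).re = 2*π*S := by
      rw [show ((2*π*S : ℂ)) = (((2*π*S : ℝ)) : ℂ) by push_cast; ring, Complex.ofReal_re]
    rw [h2] at this
    linarith
  have : 2*π*S ≤ 2*π := by linarith [hA, hfinal]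
  rw [hSdef] at *
  nlinarith [hπ]

lemma lemD (c : ℕ → ℂ) (hc0 : c 0 = 0)
    (hconv : ∀ ξ : ℂ, ‖ξ‖ ≤ 1 → ∃ s : ℂ, HasSum (fun k => c k * ξ ^ k) s ∧ ‖s‖ ≤ 1) :
    Summable (fun k : ℕ => ‖c (k+1)‖ * ((Real.sqrt 2)⁻¹)^(k+1)) ∧
      ∑' k : ℕ, ‖c (k+1)‖ * ((Real.sqrt 2)⁻¹)^(k+1) ≤ 1 := by
  -- bound on coefficients
  obtain ⟨s1, hs1, -⟩ := hconv 1 (by simp)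
  have hsummable : Summable c := by
    have := hs1.summable
    simpa using this
  obtain ⟨C, hC⟩ : ∃ C, ∀ k, ‖c k‖ ≤ C := by
    have h1 : BddAbove (Set.range fun k => ‖c k‖) :=
      (hsummable.tendsto_atTop_zero.norm.bddAbove_range)
    obtain ⟨C, hC⟩ := h1
    exact ⟨C, fun k => hC (Set.mem_range_self k)⟩
  have hb : ∀ ξ : ℂ, ‖ξ‖ ≤ 1 → ‖∑' k, c k * ξ^k‖ ≤ 1 := by
    intro ξ hξ
    obtain ⟨s, hs, hsle⟩ := hconv ξ hξ
    rw [hs.tsum_eq]; exact hsle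
  -- Parseval bound with r → 1
  have hP : ∀ N : ℕ, ∑ j ∈ Finset.range N, ‖c j‖^2 ≤ 1 := by
    intro N
    set φ : ℝ → ℝ := fun r => ∑ j ∈ Finset.range N, ‖c j‖^2 * r^(2*j) with hφ
    have hφcont : Continuous φ := by
      apply continuous_finset_sum
      intro j _
      exact continuous_const.mul (continuous_pow _)
    have hφ1 : φ 1 = ∑ j ∈ Finset.range N, ‖c j‖^2 := by
      simp [hφ]
    have hle : ∀ᶠ r in nhdsWithin (1:ℝ) (Set.Iio 1), φ r ≤ 1 := by
      filter_upwards [Ioo_mem_nhdsLT_of_mem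
        (show (1:ℝ) ∈ Set.Ioc (0:ℝ) 1 by norm_num)] with r hr
      exact lemC c C hC hb r hr.1 hr.2 N
    have htend : Filter.Tendsto φ (nhdsWithin (1:ℝ) (Set.Iio 1)) (nhds (φ 1)) :=
      (hφcont.tendsto 1).mono_left nhdsWithin_le_nhds
    have := le_of_tendsto htend hle
    rwa [hφ1] at this
  -- geometric sums
  set t : ℝ := (Real.sqrt 2)⁻¹ with ht
  have ht0 : 0 ≤ t := by positivity
  have ht2 : t^2 = 1/2 := by
    rw [ht, inv_pow, Real.sq_sqrt (by norm_num : (2:ℝ) ≥ 0)]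
    norm_num
  have hgeom : ∀ N : ℕ, ∑ k ∈ Finset.range N, ((1:ℝ)/2)^(k+1) = 1 - (1/2)^N := by
    intro N
    induction N with
    | zero => simp
    | succ N ih =>
      rw [Finset.sum_range_succ, ih]
      ring
  -- partial sums bounded by 1
  have hpartial : ∀ N : ℕ, ∑ k ∈ Finset.range N, ‖c (k+1)‖ * t^(k+1) ≤ 1 := by
    intro N
    have hCS' : (∑ k ∈ Finset.range N, ‖c (k+1)‖ * t^(k+1))^2
        ≤ (∑ k ∈ Finset.range N, ‖c (k+1)‖^2) * (∑ k ∈ Finset.range N, (t^(k+1))^2) := by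
      exact Finset.sum_mul_sq_le_sq_mul_sq (Finset.range N)
        (fun k => ‖c (k+1)‖) (fun k => t^(k+1))
    have h1 : ∑ k ∈ Finset.range N, ‖c (k+1)‖^2 ≤ 1 := by
      have := hP (N+1)
      rw [Finset.sum_range_succ'] at this
      simp [hc0] at this
      exact this
    have h2 : ∑ k ∈ Finset.range N, (t^(k+1))^2 ≤ 1 := by
      have : ∀ k, (t^(k+1))^2 = ((1:ℝ)/2)^(k+1) := by
        intro k
        rw [← pow_mul, mul_comm (k+1) 2, pow_mul, ht2]
      rw [Finset.sum_congr rfl (fun k _ => this k), hgeom]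
      have : (0:ℝ) ≤ (1/2)^N := by positivity
      linarith
    have hnn : 0 ≤ ∑ k ∈ Finset.range N, ‖c (k+1)‖ * t^(k+1) :=
      Finset.sum_nonneg fun k _ => by positivity
    nlinarith [hCS', h1, h2,
      Finset.sum_nonneg (s := Finset.range N) (f := fun k => ‖c (k+1)‖^2)
        (fun k _ => by positivity)]
  constructor
  · exact summable_of_sum_range_le (fun k => by positivity) hpartial
  · exact Real.tsum_le_of_sum_range_le (fun k => by positivity) hpartial


/-- Multidimensional Bombieri inequality (Theorem 2 of Liu–Ponnusamy):
if `Q ⊆ ℂⁿ` is an open complete circular domain containing `0`, `f` is holomorphic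
on `Q` with `f(0) = 0` and `|f| < 1` on `Q`, expanded as `f = Σ_{k≥1} P_k` with `P_k`
homogeneous of degree `k`, then `Σ_{k≥1} |P_k((1/√2)•w)| ≤ 1` for every `w ∈ Q`. -/
theorem stmt_1 (n : ℕ) (Q : Set (Fin n → ℂ)) (hQopen : IsOpen Q)
    (h0Q : (0 : Fin n → ℂ) ∈ Q)
    (hcirc : ∀ z ∈ Q, ∀ ξ : ℂ, ‖ξ‖ ≤ 1 → ξ • z ∈ Q)
    (f : (Fin n → ℂ) → ℂ) (hf : DifferentiableOn ℂ f Q)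
    (hf0 : f 0 = 0)
    (hb : ∀ z ∈ Q, ‖f z‖ < 1)
    (P : ℕ → (Fin n → ℂ) → ℂ)
    (hhom : ∀ (k : ℕ) (ξ : ℂ) (z : Fin n → ℂ), P k (ξ • z) = ξ ^ k * P k z)
    (hsum : ∀ z ∈ Q, HasSum (fun k : ℕ => P (k + 1) z) (f z))
    (w : Fin n → ℂ) (hw : w ∈ Q) :
    Summable (fun k : ℕ => ‖P (k + 1) ((((Real.sqrt 2)⁻¹ : ℝ) : ℂ) • w)‖) ∧
    ∑' k : ℕ, ‖P (k + 1) ((((Real.sqrt 2)⁻¹ : ℝ) : ℂ) • w)‖ ≤ 1 := by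
  set c : ℕ → ℂ := fun k => if k = 0 then 0 else P k w with hc
  have hc0 : c 0 = 0 := by simp [hc]
  have hconv : ∀ ξ : ℂ, ‖ξ‖ ≤ 1 → ∃ s : ℂ, HasSum (fun k => c k * ξ ^ k) s ∧ ‖s‖ ≤ 1 := by
    intro ξ hξ
    have hmem : ξ • w ∈ Q := hcirc w hw ξ hξ
    have h1 : HasSum (fun k : ℕ => P (k + 1) (ξ • w)) (f (ξ • w)) := hsum _ hmem
    have h2 : (fun k : ℕ => P (k + 1) (ξ • w)) = fun k : ℕ => c (k + 1) * ξ ^ (k + 1) := by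
      funext k
      rw [hhom (k + 1) ξ w]
      simp only [hc, Nat.succ_ne_zero, if_false]
      ring
    rw [h2] at h1
    have h3 : HasSum (fun k : ℕ => c k * ξ ^ k)
        (f (ξ • w) + ∑ i ∈ Finset.range 1, c i * ξ ^ i) :=
      (hasSum_nat_add_iff (f := fun k : ℕ => c k * ξ ^ k) 1).mp h1
    refine ⟨_, h3, ?_⟩
    have : (∑ i ∈ Finset.range 1, c i * ξ ^ i) = 0 := by simp [hc0]
    rw [this, add_zero]
    exact (hb _ hmem).le
  obtain ⟨hsummable, hle⟩ := lemD c hc0 hconv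
  have hkey : ∀ k : ℕ, ‖P (k + 1) ((((Real.sqrt 2)⁻¹ : ℝ) : ℂ) • w)‖
      = ‖c (k+1)‖ * ((Real.sqrt 2)⁻¹)^(k+1) := by
    intro k
    rw [hhom (k + 1) _ w, norm_mul, norm_pow, Complex.norm_real,
      Real.norm_of_nonneg (by positivity)]
    simp only [hc, Nat.succ_ne_zero, if_false]
    ring
  constructor
  · rw [show (fun k : ℕ => ‖P (k + 1) ((((Real.sqrt 2)⁻¹ : ℝ) : ℂ) • w)‖)
        = fun k : ℕ => ‖c (k+1)‖ * ((Real.sqrt 2)⁻¹)^(k+1) from funext hkey]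
    exact hsummable
  · rw [show (fun k : ℕ => ‖P (k + 1) ((((Real.sqrt 2)⁻¹ : ℝ) : ℂ) • w)‖)
        = fun k : ℕ => ‖c (k+1)‖ * ((Real.sqrt 2)⁻¹)^(k+1) from funext hkey]
    exact hle
end

section
/- Let a = 1/√2 and consider the function f₀(z₁,z₂) = z₁(a − z₂)/(1 − a z₂) = a z₁ − (1 − a²) Σ_{k=1}^∞ a^{k−1} z₁ z₂^k, which is holomorphic on the unit bidisk 𝔻² with |f₀| < 1 there. For every (z₁,z₂) ∈ 𝔻² with |z₁| + |z₂| > √2, the majorant series of f₀ satisfies a|z₁| + (1 − a²)|z₁| Σ_{k=1}^∞ a^{k−1} |z₂|^k = |z₁|/(√2 − |z₂|) > 1. (Consequently K₂⁰ ≤ 1/√2.) -/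
/-- Sharpness part of Theorem 3 of Liu–Ponnusamy: with `a = 1/√2`, the function
`f₀(z₁,z₂) = z₁(a - z₂)/(1 - a z₂)` is holomorphic on the unit bidisk with `|f₀| < 1`
there, and for every `(z₁,z₂)` in the bidisk with `|z₁| + |z₂| > √2` its majorant
series satisfies
`a|z₁| + (1-a²)|z₁| Σ_{k≥1} a^{k-1} |z₂|^k = |z₁|/(√2 - |z₂|) > 1`;
consequently `K₂⁰ ≤ 1/√2`. -/
theorem stmt_4 (f₀ : ℂ × ℂ → ℂ)
    (hf₀ : ∀ z : ℂ × ℂ,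
      f₀ z = z.1 * ((((Real.sqrt 2)⁻¹ : ℝ) : ℂ) - z.2) /
        (1 - (((Real.sqrt 2)⁻¹ : ℝ) : ℂ) * z.2)) :
    DifferentiableOn ℂ f₀ {z : ℂ × ℂ | ‖z.1‖ < 1 ∧ ‖z.2‖ < 1} ∧
    (∀ z : ℂ × ℂ, ‖z.1‖ < 1 → ‖z.2‖ < 1 → ‖f₀ z‖ < 1) ∧
    (∀ z : ℂ × ℂ, ‖z.1‖ < 1 → ‖z.2‖ < 1 → Real.sqrt 2 < ‖z.1‖ + ‖z.2‖ →
      (Real.sqrt 2)⁻¹ * ‖z.1‖ +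
          (1 - ((Real.sqrt 2)⁻¹) ^ 2) * ‖z.1‖ *
            ∑' k : ℕ, ((Real.sqrt 2)⁻¹) ^ k * ‖z.2‖ ^ (k + 1)
        = ‖z.1‖ / (Real.sqrt 2 - ‖z.2‖) ∧
      1 < ‖z.1‖ / (Real.sqrt 2 - ‖z.2‖)) := by
  have h2 : (Real.sqrt 2) ^ 2 = 2 := Real.sq_sqrt (by norm_num)
  have hs2pos : 0 < Real.sqrt 2 := Real.sqrt_pos.2 (by norm_num)
  have hs2gt1 : 1 < Real.sqrt 2 := by nlinarith
  set a : ℝ := (Real.sqrt 2)⁻¹ with ha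
  have ha2 : a ^ 2 = 1/2 := by rw [ha, inv_pow, h2]; norm_num
  have hapos : 0 < a := inv_pos.2 hs2pos
  have halt1 : a < 1 := by
    rw [ha]
    exact inv_lt_one_of_one_lt₀ hs2gt1
  have hA : a * Real.sqrt 2 = 1 := inv_mul_cancel₀ hs2pos.ne'
  have hden : ∀ w : ℂ, ‖w‖ < 1 → (1 : ℂ) - (a : ℂ) * w ≠ 0 := by
    intro w hw h
    have h1 : (a : ℂ) * w = 1 := by linear_combination -h
    have h2 : ‖(a : ℂ) * w‖ = 1 := by rw [h1]; simp
    rw [norm_mul, Complex.norm_real, Real.norm_eq_abs, abs_of_pos hapos] at h2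
    nlinarith [norm_nonneg w]
  refine ⟨?_, ?_, ?_⟩
  · have hfe : f₀ = fun z : ℂ × ℂ => z.1 * ((a : ℂ) - z.2) / (1 - (a : ℂ) * z.2) :=
      funext hf₀
    rw [hfe]
    intro z hz
    have hdiff : DifferentiableAt ℂ
        (fun z : ℂ × ℂ => z.1 * ((a : ℂ) - z.2) / (1 - (a : ℂ) * z.2)) z := by
      have hne : (1 : ℂ) - (a : ℂ) * z.2 ≠ 0 := hden z.2 hz.2
      simp only [div_eq_mul_inv]
      exact (differentiableAt_fst.mul
          ((differentiableAt_const _).sub differentiableAt_snd)).mul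
        (((differentiableAt_const _).sub
          ((differentiableAt_const _).mul differentiableAt_snd)).inv hne)
    exact hdiff.differentiableWithinAt
  · intro z hz1 hz2
    rw [hf₀, norm_div, norm_mul]
    have hdpos : 0 < ‖(1 : ℂ) - (a : ℂ) * z.2‖ := norm_pos_iff.2 (hden z.2 hz2)
    have hw : z.2.re ^ 2 + z.2.im ^ 2 < 1 := by
      have h' := Complex.sq_norm z.2
      rw [Complex.normSq_apply] at h'
      nlinarith [norm_nonneg z.2]
    have hnum : ‖((a : ℝ) : ℂ) - z.2‖ < ‖(1 : ℂ) - (a : ℂ) * z.2‖ := by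
      have hsq : ‖((a : ℝ) : ℂ) - z.2‖ ^ 2 < ‖(1 : ℂ) - (a : ℂ) * z.2‖ ^ 2 := by
        rw [Complex.sq_norm, Complex.sq_norm,
          Complex.normSq_apply, Complex.normSq_apply]
        simp only [Complex.sub_re, Complex.sub_im, Complex.mul_re, Complex.mul_im,
          Complex.one_re, Complex.one_im, Complex.ofReal_re, Complex.ofReal_im]
        nlinarith [hw, ha2, halt1, hapos, sq_nonneg z.2.re, sq_nonneg z.2.im]
      exact lt_of_pow_lt_pow_left₀ 2 (norm_nonneg _) hsq
    rw [div_lt_one hdpos]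
    nlinarith [norm_nonneg (((a : ℝ) : ℂ) - z.2), norm_nonneg z.1]
  · intro z hz1 hz2 hsum
    have hr0 : 0 ≤ ‖z.2‖ := norm_nonneg _
    have har : a * ‖z.2‖ < 1 := by nlinarith
    have har0 : 0 ≤ a * ‖z.2‖ := by positivity
    have hd : 0 < Real.sqrt 2 - ‖z.2‖ := by nlinarith
    have hd2 : 0 < 1 - a * ‖z.2‖ := by nlinarith
    have htsum : ∑' k : ℕ, a ^ k * ‖z.2‖ ^ (k + 1) = ‖z.2‖ / (1 - a * ‖z.2‖) := by
      have hc : ∀ k : ℕ, a ^ k * ‖z.2‖ ^ (k + 1) = ‖z.2‖ * (a * ‖z.2‖) ^ k := by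
        intro k; rw [mul_pow]; ring
      rw [tsum_congr hc, tsum_mul_left, tsum_geometric_of_lt_one har0 har, div_eq_mul_inv]
    clear_value a
    constructor
    · rw [htsum]
      have hd' : Real.sqrt 2 - ‖z.2‖ ≠ 0 := by
        exact hd.ne'
      have hd2' : 1 - a * ‖z.2‖ ≠ 0 := by
        exact hd2.ne'
      field_simp [hd', hd2']
      linear_combination ‖z.1‖ * hA -
        2 * ‖z.1‖ * ‖z.2‖ * (Real.sqrt 2 - ‖z.2‖) * ha2
    · rw [lt_div_iff₀ hd]
      nlinarith
end

section
/- Let Q ⊆ ℂⁿ be an open complete circular domain containing 0. Let f be holomorphic on Q with |f(z)| < 1 for all z ∈ Q, and suppose f(z) = Σ_{k=0}^∞ P_k(z) on Q, where each P_k is a homogeneous polynomial map of degree k. Let p ∈ (0,2] and N ≥ 1 be an integer. Then for every w ∈ Q and every r ∈ [0,1) satisfying 2(1+r)r^N ≤ p(1−r)² (equivalently r ≤ R_{N,p}, the positive root of 2(1+r)r^N − p(1−r)² = 0), one has |f(r•w)|^p + Σ_{k=N}^∞ |P_k(r•w)| ≤ 1. -/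
open Complex Metric Filter Asymptotics Topology NNReal


private lemma hasFPS_of_hasSum {a : ℕ → ℂ} {g : ℂ → ℂ}
    (hg : ∀ ξ : ℂ, ‖ξ‖ ≤ 1 → HasSum (fun m => a m * ξ ^ m) (g ξ)) :
    HasFPowerSeriesOnBall g (FormalMultilinearSeries.ofScalars ℂ a) 0 1 := by
  have hsummable : Summable fun m => ‖a m‖ * (1:ℝ≥0) ^ m := by
    have h1 := (hg 1 (by norm_num)).summable
    simpa using h1.norm
  refine ⟨?_, one_pos, ?_⟩
  · have := FormalMultilinearSeries.le_radius_of_summable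
      (FormalMultilinearSeries.ofScalars ℂ a) (r := 1) (by
        convert hsummable using 2 with n
        rw [FormalMultilinearSeries.ofScalars_norm])
    simpa using this
  · intro y hy
    have hy' : ‖y‖ ≤ 1 := by
      rw [EMetric.mem_ball, edist_zero_right] at hy
      rw [← ofReal_norm, ENNReal.ofReal_lt_one] at hy
      exact le_of_lt (by exact_mod_cast hy)
    simpa only [FormalMultilinearSeries.ofScalars_apply_eq, smul_eq_mul, zero_add,
      mul_comm] using hg y hy'

private lemma val_at_zero {a : ℕ → ℂ} {g : ℂ → ℂ}
    (hg : ∀ ξ : ℂ, ‖ξ‖ ≤ 1 → HasSum (fun m => a m * ξ ^ m) (g ξ)) : g 0 = a 0 := by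
  have h0 := hg 0 (by simp)
  have h1 : HasSum (fun m => a m * (0:ℂ) ^ m) ((fun m => a m * (0:ℂ) ^ m) 0) :=
    hasSum_single 0 (fun m hm => by simp [zero_pow hm])
  simpa using h0.unique h1


private lemma tendsto_sub_partialSum {h : ℂ → ℂ} {q : FormalMultilinearSeries ℂ ℂ ℂ}
    (hq : HasFPowerSeriesAt h q 0) (m : ℕ) :
    Filter.Tendsto (fun ξ : ℂ => (h ξ - q.partialSum (m + 1) ξ) / ξ ^ m) (𝓝[≠] 0) (𝓝 0) := by
  have hO := hq.isBigO_sub_partialSum_pow (m + 1)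
  rw [isBigO_iff] at hO
  obtain ⟨C, hC⟩ := hO
  have hbound : ∀ᶠ ξ : ℂ in 𝓝[≠] 0,
      ‖(h ξ - q.partialSum (m + 1) ξ) / ξ ^ m‖ ≤ C * ‖ξ‖ := by
    have hC' : ∀ᶠ y in 𝓝[≠] (0:ℂ), ‖h (0 + y) - q.partialSum (m+1) y‖ ≤ C * ‖‖y‖ ^ (m+1)‖ :=
      nhdsWithin_le_nhds hC
    filter_upwards [hC', self_mem_nhdsWithin] with ξ h1 h2
    have hξ : ξ ≠ 0 := h2
    have hξp : (0:ℝ) < ‖ξ‖ ^ m := pow_pos (norm_pos_iff.mpr hξ) m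
    rw [norm_div, norm_pow, div_le_iff₀ hξp]
    calc ‖h ξ - q.partialSum (m+1) ξ‖ = ‖h (0 + ξ) - q.partialSum (m+1) ξ‖ := by rw [zero_add]
      _ ≤ C * ‖‖ξ‖ ^ (m+1)‖ := h1
      _ = C * ‖ξ‖ * ‖ξ‖ ^ m := by
          rw [Real.norm_of_nonneg (by positivity)]; ring
  have hg0 : Filter.Tendsto (fun ξ : ℂ => C * ‖ξ‖) (𝓝[≠] (0:ℂ)) (𝓝 0) := by
    have : Filter.Tendsto (fun ξ : ℂ => C * ‖ξ‖) (𝓝 0) (𝓝 (C * ‖(0:ℂ)‖)) :=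
      (continuous_const.mul continuous_norm).tendsto 0
    simpa using this.mono_left nhdsWithin_le_nhds
  exact squeeze_zero_norm' hbound hg0

private lemma coeff_eq_of_tendsto {h : ℂ → ℂ} {q : FormalMultilinearSeries ℂ ℂ ℂ}
    (hq : HasFPowerSeriesAt h q 0) {k : ℕ} {L : ℂ}
    (hlim : Filter.Tendsto (fun ξ : ℂ => h ξ / ξ ^ k) (𝓝[≠] 0) (𝓝 L)) :
    q.coeff k = L := by
  have key : ∀ m, m ≤ k → (∀ j, j < m → q.coeff j = 0) → q.coeff m = if m = k then L else 0 := by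
    intro m hm hzero
    have h1 := tendsto_sub_partialSum hq m
    have hps : ∀ ξ : ℂ, q.partialSum (m+1) ξ = ξ ^ m * q.coeff m := by
      intro ξ
      rw [FormalMultilinearSeries.partialSum]
      rw [Finset.sum_eq_single_of_mem m (Finset.self_mem_range_succ m)]
      · rw [FormalMultilinearSeries.apply_eq_pow_smul_coeff, smul_eq_mul]
      · intro j hj hne
        have hjm : j < m := lt_of_le_of_ne (Nat.lt_succ_iff.mp (Finset.mem_range.mp hj)) hne
        rw [FormalMultilinearSeries.apply_eq_pow_smul_coeff, hzero j hjm, smul_zero]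
    -- limit of h ξ / ξ ^ m
    have h2 : Filter.Tendsto (fun ξ : ℂ => h ξ / ξ ^ m) (𝓝[≠] 0) (𝓝 (if m = k then L else 0)) := by
      rcases eq_or_lt_of_le hm with rfl | hmk
      · simpa using hlim
      · rw [if_neg (Nat.ne_of_lt hmk)]
        have h3 : Filter.Tendsto (fun ξ : ℂ => (h ξ / ξ ^ k) * ξ ^ (k - m)) (𝓝[≠] 0) (𝓝 0) := by
          have h4 : Filter.Tendsto (fun ξ : ℂ => ξ ^ (k - m)) (𝓝[≠] 0) (𝓝 0) := by
            have h5 : Filter.Tendsto (fun ξ : ℂ => ξ ^ (k - m)) (𝓝 0) (𝓝 ((0:ℂ) ^ (k-m))) :=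
              (continuous_pow (k-m)).tendsto 0
            rw [zero_pow (by omega)] at h5
            exact h5.mono_left nhdsWithin_le_nhds
          simpa using hlim.mul h4
        apply h3.congr'
        filter_upwards [self_mem_nhdsWithin] with ξ (hξ : ξ ≠ 0)
        rw [div_mul_eq_mul_div, div_eq_div_iff (pow_ne_zero _ hξ) (pow_ne_zero _ hξ)]
        rw [mul_assoc, ← pow_add]
        congr 2
        omega
    -- combine
    have h6 : Filter.Tendsto (fun ξ : ℂ => h ξ / ξ ^ m - (h ξ - q.partialSum (m+1) ξ) / ξ ^ m)
        (𝓝[≠] 0) (𝓝 ((if m = k then L else 0) - 0)) := h2.sub h1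
    have h7 : Filter.Tendsto (fun _ : ℂ => q.coeff m) (𝓝[≠] 0) (𝓝 ((if m = k then L else 0) - 0)) := by
      apply h6.congr'
      filter_upwards [self_mem_nhdsWithin] with ξ (hξ : ξ ≠ 0)
      rw [hps, div_sub_div_same, sub_sub_cancel, mul_comm, mul_div_assoc, div_self (pow_ne_zero _ hξ), mul_one]
    have := tendsto_nhds_unique tendsto_const_nhds h7
    rw [sub_zero] at this
    exact this
  have hz : ∀ j, j < k → q.coeff j = 0 := by
    intro j hj
    induction j using Nat.strong_induction_on with
    | _ j ih =>
      have := key j (le_of_lt hj) (fun i hi => ih i hi (hi.trans hj))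
      rwa [if_neg (Nat.ne_of_lt hj)] at this
  have := key k le_rfl hz
  rwa [if_pos rfl] at this


private lemma coeff_le_one {h : ℂ → ℂ} {q : FormalMultilinearSeries ℂ ℂ ℂ}
    (hq : HasFPowerSeriesAt h q 0) (hd : DifferentiableOn ℂ h (ball (0:ℂ) 1))
    (hb : ∀ ξ ∈ ball (0:ℂ) 1, ‖h ξ‖ ≤ 1) (n : ℕ) : ‖q.coeff n‖ ≤ 1 := by
  have key : ∀ s : ℝ≥0, (s:ℝ) ∈ Set.Ioo (0:ℝ) 1 → ‖q.coeff n‖ ≤ ((s:ℝ)⁻¹) ^ n := by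
    intro s hs
    have hsub : closedBall (0:ℂ) s ⊆ ball 0 1 := closedBall_subset_ball hs.2
    have h2 : HasFPowerSeriesOnBall h (cauchyPowerSeries h 0 s) 0 s :=
      (hd.mono hsub).hasFPowerSeriesOnBall (by exact_mod_cast hs.1)
    have heq : q = cauchyPowerSeries h 0 s :=
      hq.eq_formalMultilinearSeries h2.hasFPowerSeriesAt
    have hcont : Continuous fun θ : ℝ => ‖h (circleMap 0 s θ)‖ := by
      apply Continuous.norm
      apply (hd.continuousOn).comp_continuous (continuous_circleMap 0 s)
      intro θ
      rw [mem_ball, dist_zero_right]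
      simpa [norm_circleMap_zero] using hs.2
    have hint : (∫ θ : ℝ in (0:ℝ)..2 * Real.pi, ‖h (circleMap 0 s θ)‖) ≤ 2 * Real.pi := by
      have := intervalIntegral.integral_mono_on (a := (0:ℝ)) (b := 2 * Real.pi)
        (f := fun θ => ‖h (circleMap 0 s θ)‖) (g := fun _ => (1:ℝ))
        (by positivity) (hcont.intervalIntegrable _ _) ((intervalIntegrable_const : IntervalIntegrable (fun _ => (1:ℝ)) MeasureTheory.volume 0 (2*Real.pi)))
        (fun θ _ => hb _ (by rw [mem_ball, dist_zero_right]; simpa [norm_circleMap_zero] using hs.2))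
      simpa using this
    have hnorm : ‖q n‖ ≤ ((s:ℝ)⁻¹) ^ n := by
      rw [heq]
      refine (norm_cauchyPowerSeries_le h 0 s n).trans ?_
      have habs : |(s:ℝ)| = (s:ℝ) := abs_of_pos hs.1
      rw [habs]
      have h1 : (2 * Real.pi)⁻¹ * (∫ θ : ℝ in (0:ℝ)..2 * Real.pi, ‖h (circleMap 0 s θ)‖) ≤ 1 := by
        rw [inv_mul_le_iff₀ (by positivity)]
        linarith [hint]
      calc (2 * Real.pi)⁻¹ * (∫ θ : ℝ in (0:ℝ)..2*Real.pi, ‖h (circleMap 0 s θ)‖) * ((s:ℝ)⁻¹)^n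
          ≤ 1 * ((s:ℝ)⁻¹)^n := by
            apply mul_le_mul_of_nonneg_right h1 (by positivity)
        _ = ((s:ℝ)⁻¹)^n := one_mul _
    calc ‖q.coeff n‖ = ‖q n (fun _ => (1:ℂ))‖ := rfl
      _ ≤ ‖q n‖ * ∏ _i : Fin n, ‖(1:ℂ)‖ := (q n).le_opNorm _
      _ = ‖q n‖ := by simp
      _ ≤ ((s:ℝ)⁻¹) ^ n := hnorm
  have hten : Filter.Tendsto (fun s : ℝ => (s⁻¹) ^ n) (𝓝[<] (1:ℝ)) (𝓝 1) := by
    have hc : Filter.Tendsto (fun s : ℝ => (s⁻¹) ^ n) (𝓝 (1:ℝ)) (𝓝 (((1:ℝ)⁻¹) ^ n)) := by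
      apply Filter.Tendsto.pow
      exact tendsto_inv₀ one_ne_zero
    simpa using hc.mono_left nhdsWithin_le_nhds
  refine ge_of_tendsto hten ?_
  filter_upwards [Ioo_mem_nhdsLT_of_mem (Set.mem_Ioc.mpr ⟨(by norm_num : (1/2:ℝ) < 1), le_rfl⟩)] with s hs
  have hs0 : (0:ℝ) < s := by
    have : (1/2 : ℝ) < s := hs.1
    linarith
  exact key ⟨s, hs0.le⟩ ⟨hs0, hs.2⟩


private lemma norm_sq_eq_normSq (u : ℂ) : ‖u‖ ^ 2 = Complex.normSq u := by
  rw [Complex.sq_norm]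

private lemma normSq_expand (a0 z : ℂ) :
    ‖a0 - z‖ ^ 2 = ‖a0‖^2 - 2 * ((starRingEnd ℂ) a0 * z).re + ‖z‖^2 ∧
    ‖1 - (starRingEnd ℂ) a0 * z‖ ^ 2 = 1 - 2 * ((starRingEnd ℂ) a0 * z).re + ‖a0‖^2 * ‖z‖^2 := by
  constructor <;>
  · simp only [norm_sq_eq_normSq]
    simp only [Complex.normSq_apply, Complex.sub_re, Complex.sub_im, Complex.mul_re,
      Complex.mul_im, Complex.conj_re, Complex.conj_im, Complex.one_re, Complex.one_im]
    ring

private lemma mobius_lt {a0 z : ℂ} (ha : ‖a0‖ < 1) (hz : ‖z‖ < 1) :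
    ‖a0 - z‖ < ‖1 - (starRingEnd ℂ) a0 * z‖ := by
  obtain ⟨e1, e2⟩ := normSq_expand a0 z
  have h1 : 0 < 1 - ‖a0‖^2 := by nlinarith [norm_nonneg a0]
  have h2 : 0 < 1 - ‖z‖^2 := by nlinarith [norm_nonneg z]
  have hsq : ‖a0 - z‖^2 < ‖1 - (starRingEnd ℂ) a0 * z‖^2 := by
    rw [e1, e2]
    nlinarith [mul_pos h1 h2]
  exact lt_of_pow_lt_pow_left₀ 2 (norm_nonneg _) hsq

private lemma mobius_ne {a0 z : ℂ} (ha : ‖a0‖ < 1) (hz : ‖z‖ < 1) :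
    1 - (starRingEnd ℂ) a0 * z ≠ 0 := by
  intro hcon
  have := mobius_lt ha hz
  rw [hcon, norm_zero] at this
  exact absurd this (not_lt.mpr (norm_nonneg _))

private lemma mobius_bound {a0 z : ℂ} {ρ : ℝ} (ha : ‖a0‖ ≤ 1) (hz : ‖z‖ ≤ ρ) (hρ : ρ ≤ 1) :
    ‖a0 - z‖ * (1 + ‖a0‖ * ρ) ≤ (‖a0‖ + ρ) * ‖1 - (starRingEnd ℂ) a0 * z‖ := by
  obtain ⟨e1, e2⟩ := normSq_expand a0 z
  set A := ‖a0‖ with hA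
  set σ := ‖z‖ with hσ
  set t := ((starRingEnd ℂ) a0 * z).re with ht
  have hA0 : 0 ≤ A := norm_nonneg _
  have hσ0 : 0 ≤ σ := norm_nonneg _
  have hρ0 : 0 ≤ ρ := le_trans hσ0 hz
  have habs : |t| ≤ A * σ := by
    rw [ht, hA, hσ]
    refine (Complex.abs_re_le_norm _).trans ?_
    simp
  have htlow : -(A * σ) ≤ t := neg_le_of_abs_le habs
  have hint1 : 0 ≤ (t + A*σ) * ((1-A^2) * (1-ρ^2)) :=
    mul_nonneg (by linarith) (mul_nonneg (by nlinarith) (by nlinarith))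
  have hint2 : 0 ≤ ((ρ - σ) * (1-A^2)) * ((A+σ)*(1+A*ρ) + (A+ρ)*(1+A*σ)) :=
    mul_nonneg (mul_nonneg (by linarith) (by nlinarith)) (by positivity)
  have hsq : (‖a0 - z‖ * (1 + A * ρ))^2 ≤ ((A + ρ) * ‖1 - (starRingEnd ℂ) a0 * z‖)^2 := by
    rw [mul_pow, mul_pow, e1, e2]
    nlinarith [hint1, hint2]
  have hL : 0 ≤ ‖a0 - z‖ * (1 + A * ρ) := by positivity
  have hR : 0 ≤ (A + ρ) * ‖1 - (starRingEnd ℂ) a0 * z‖ := by positivity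
  exact (pow_le_pow_iff_left₀ hL hR two_ne_zero).mp hsq

private lemma pick {g : ℂ → ℂ} {a0 : ℂ}
    (hd : DifferentiableOn ℂ g (ball (0:ℂ) 1)) (hg0 : g 0 = a0)
    (hball : ∀ ξ ∈ ball (0:ℂ) 1, ‖g ξ‖ < 1) {r : ℝ} (hr0 : 0 ≤ r) (hr1 : r < 1) :
    ‖g (r:ℂ)‖ * (1 + ‖a0‖ * r) ≤ ‖a0‖ + r := by
  have ha : ‖a0‖ < 1 := hg0 ▸ hball 0 (by simp)
  set c := (starRingEnd ℂ) a0 with hc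
  set H : ℂ → ℂ := fun ξ => (a0 - g ξ) / (1 - c * g ξ) with hH
  have hHlt : ∀ ξ ∈ ball (0:ℂ) 1, ‖H ξ‖ < 1 := by
    intro ξ hξ
    have h1 := mobius_lt ha (hball ξ hξ)
    have h2 : 1 - c * g ξ ≠ 0 := mobius_ne ha (hball ξ hξ)
    rw [hH]
    simp only []
    rw [norm_div, div_lt_one (norm_pos_iff.mpr h2)]
    exact h1
  have hHd : DifferentiableOn ℂ H (ball (0:ℂ) 1) := by
    apply DifferentiableOn.div
    · exact (differentiableOn_const a0).sub hd
    · exact (differentiableOn_const 1).sub ((differentiableOn_const c).mul hd)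
    · intro ξ hξ
      exact mobius_ne ha (hball ξ hξ)
  have hH0 : H 0 = 0 := by
    rw [hH]
    simp [hg0]
  have hSchwarz : ‖H (r:ℂ)‖ ≤ r := by
    have hmaps : Set.MapsTo H (ball (0:ℂ) 1) (ball (0:ℂ) 1) := by
      intro ξ hξ
      rw [mem_ball, dist_zero_right]
      exact hHlt ξ hξ
    have habs : ‖(r:ℂ)‖ < 1 := by
      rwa [Complex.norm_real, Real.norm_of_nonneg hr0]
    have := Complex.norm_le_norm_of_mapsTo_ball hHd (hmaps.mono_right ball_subset_closedBall) hH0 habs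
    calc ‖H (r:ℂ)‖ = ‖H (r:ℂ)‖ := rfl
      _ ≤ ‖(r:ℂ)‖ := this
      _ = r := by rw [Complex.norm_real, Real.norm_of_nonneg hr0]
  -- invert the Möbius transform
  set z := H (r:ℂ) with hz
  have hrball : (r:ℂ) ∈ ball (0:ℂ) 1 := by
    rw [mem_ball, dist_zero_right]
    simpa [Complex.norm_real, _root_.abs_of_nonneg hr0] using hr1
  have hu1 : ‖g (r:ℂ)‖ < 1 := hball _ hrball
  have hden : 1 - c * g (r:ℂ) ≠ 0 := mobius_ne ha hu1
  have hzval : z * (1 - c * g (r:ℂ)) = a0 - g (r:ℂ) := by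
    rw [hz, hH]
    field_simp
    exact mul_div_cancel_right₀ _ (by rwa [mul_comm] at hden)
  have hginv : g (r:ℂ) * (1 - c * z) = a0 - z := by linear_combination hzval
  have hzlt : ‖z‖ < 1 := lt_of_le_of_lt hSchwarz hr1
  have hbound := mobius_bound (a0 := a0) (z := z) ha.le hSchwarz hr1.le
  have heq : ‖g (r:ℂ)‖ * ‖1 - c * z‖ = ‖a0 - z‖ := by
    rw [← norm_mul, hginv]
  have hden2 : 0 < ‖1 - c * z‖ := norm_pos_iff.mpr (mobius_ne ha hzlt)
  have key : ‖g (r:ℂ)‖ * (1 + ‖a0‖ * r) * ‖1 - c * z‖ ≤ (‖a0‖ + r) * ‖1 - c * z‖ := by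
    calc ‖g (r:ℂ)‖ * (1 + ‖a0‖ * r) * ‖1 - c * z‖
        = ‖g (r:ℂ)‖ * ‖1 - c * z‖ * (1 + ‖a0‖ * r) := by ring
      _ = ‖a0 - z‖ * (1 + ‖a0‖ * r) := by rw [heq]
      _ ≤ (‖a0‖ + r) * ‖1 - c * z‖ := hbound
  exact le_of_mul_le_mul_right key hden2

private lemma wiener {a : ℕ → ℂ} {g : ℂ → ℂ}
    (hg : ∀ ξ : ℂ, ‖ξ‖ ≤ 1 → HasSum (fun m => a m * ξ ^ m) (g ξ))
    (hlt : ∀ ξ : ℂ, ‖ξ‖ ≤ 1 → ‖g ξ‖ < 1) (k : ℕ) (hk : 1 ≤ k) :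
    ‖a k‖ ≤ 1 - ‖a 0‖ ^ 2 := by
  have hk0 : (k:ℕ) ≠ 0 := by omega
  have hkR : (0:ℝ) < (k:ℝ) := by exact_mod_cast Nat.pos_of_ne_zero hk0
  set ζ : ℂ := Complex.exp (2 * Real.pi * Complex.I / k) with hζdef
  have hζ : IsPrimitiveRoot ζ k := Complex.isPrimitiveRoot_exp k hk0
  have hζk : ζ ^ k = 1 := hζ.pow_eq_one
  have hζnorm : ‖ζ‖ = 1 := by
    have h1 : ‖ζ‖ ^ k = 1 := by rw [← norm_pow, hζk, norm_one]
    rcases lt_trichotomy ‖ζ‖ 1 with h | h | h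
    · exfalso
      have := pow_lt_one₀ (norm_nonneg ζ) h hk0
      rw [h1] at this
      exact lt_irrefl 1 this
    · exact h
    · exfalso
      have := one_lt_pow₀ h hk0
      rw [h1] at this
      exact lt_irrefl 1 this
  -- sum of roots of unity
  have hroots : ∀ m : ℕ, ∑ j ∈ Finset.range k, (ζ ^ m) ^ j = if k ∣ m then (k:ℂ) else 0 := by
    intro m
    by_cases hdvd : k ∣ m
    · rw [if_pos hdvd]
      obtain ⟨d, rfl⟩ := hdvd
      rw [pow_mul, hζk, one_pow]
      simp
    · rw [if_neg hdvd]
      have hne : ζ ^ m ≠ 1 := fun hcon => hdvd (hζ.pow_eq_one_iff_dvd m |>.mp hcon)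
      rw [geom_sum_eq hne]
      have : (ζ ^ m) ^ k = 1 := by rw [← pow_mul, mul_comm, pow_mul, hζk, one_pow]
      rw [this, sub_self, zero_div]
  set b : ℕ → ℂ := fun m => if k ∣ m then a m else 0 with hbdef
  set G : ℂ → ℂ := fun ξ => (k:ℂ)⁻¹ * ∑ j ∈ Finset.range k, g (ζ ^ j * ξ) with hGdef
  have hζjnorm : ∀ (j : ℕ) (ξ : ℂ), ‖ξ‖ ≤ 1 → ‖ζ ^ j * ξ‖ ≤ 1 := by
    intro j ξ hξ
    rw [norm_mul, norm_pow, hζnorm, one_pow, one_mul]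
    exact hξ
  have hkC : (k:ℂ) ≠ 0 := by exact_mod_cast hk0
  have hGsum : ∀ ξ : ℂ, ‖ξ‖ ≤ 1 → HasSum (fun m => b m * ξ ^ m) (G ξ) := by
    intro ξ hξ
    have hterm : ∀ j ∈ Finset.range k,
        HasSum (fun m => (k:ℂ)⁻¹ * (a m * (ζ ^ j * ξ) ^ m)) ((k:ℂ)⁻¹ * g (ζ ^ j * ξ)) :=
      fun j _ => (hg _ (hζjnorm j ξ hξ)).mul_left _
    have hsumj := hasSum_sum hterm
    have heq : ∀ m : ℕ, ∑ j ∈ Finset.range k, (k:ℂ)⁻¹ * (a m * (ζ ^ j * ξ) ^ m) = b m * ξ ^ m := by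
      intro m
      have hj : ∀ j : ℕ, (k:ℂ)⁻¹ * (a m * (ζ ^ j * ξ) ^ m)
          = ((k:ℂ)⁻¹ * a m * ξ ^ m) * (ζ ^ m) ^ j := by
        intro j
        rw [mul_pow, ← pow_mul, mul_comm j m, pow_mul]
        ring
      calc ∑ j ∈ Finset.range k, (k:ℂ)⁻¹ * (a m * (ζ ^ j * ξ) ^ m)
          = ∑ j ∈ Finset.range k, ((k:ℂ)⁻¹ * a m * ξ ^ m) * (ζ ^ m) ^ j :=
            Finset.sum_congr rfl (fun j _ => hj j)
        _ = ((k:ℂ)⁻¹ * a m * ξ ^ m) * ∑ j ∈ Finset.range k, (ζ ^ m) ^ j := by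
            rw [Finset.mul_sum]
        _ = b m * ξ ^ m := by
            rw [hroots m]
            by_cases hd : k ∣ m
            · rw [if_pos hd]
              have hbm : b m = a m := if_pos hd
              rw [hbm]
              field_simp
            · rw [if_neg hd]
              have hbm : b m = 0 := if_neg hd
              rw [hbm]
              ring
    have hG : ∑ j ∈ Finset.range k, (k:ℂ)⁻¹ * g (ζ ^ j * ξ) = G ξ :=
      (Finset.mul_sum _ _ _).symm
    rw [← hG]
    exact (funext heq : (fun m => ∑ j ∈ Finset.range k, (k:ℂ)⁻¹ * (a m * (ζ ^ j * ξ) ^ m))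
      = fun m => b m * ξ ^ m) ▸ hsumj
  have hGlt : ∀ ξ : ℂ, ‖ξ‖ ≤ 1 → ‖G ξ‖ < 1 := by
    intro ξ hξ
    have h1 : ‖∑ j ∈ Finset.range k, g (ζ ^ j * ξ)‖ < (k:ℝ) := by
      calc ‖∑ j ∈ Finset.range k, g (ζ ^ j * ξ)‖ ≤ ∑ j ∈ Finset.range k, ‖g (ζ ^ j * ξ)‖ :=
            norm_sum_le _ _
        _ < ∑ _j ∈ Finset.range k, (1:ℝ) := by
            apply Finset.sum_lt_sum_of_nonempty
            · exact Finset.nonempty_range_iff.mpr hk0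
            · exact fun j _ => hlt _ (hζjnorm j ξ hξ)
        _ = (k:ℝ) := by simp
    rw [hGdef]
    simp only [norm_mul, norm_inv]
    rw [Complex.norm_natCast]
    rw [inv_mul_lt_iff₀ hkR, mul_one]
    exact h1
  have hGfps := hasFPS_of_hasSum hGsum
  have hGball : Metric.ball (0:ℂ) 1 ⊆ Metric.eball (0:ℂ) 1 := by
    intro x hx
    rw [Metric.mem_eball, edist_zero_right]
    rw [mem_ball, dist_zero_right] at hx
    rw [← ofReal_norm]
    exact ENNReal.ofReal_lt_one.mpr hx
  have hGd : DifferentiableOn ℂ G (ball (0:ℂ) 1) :=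
    (hGfps.differentiableOn).mono hGball
  have hG0 : G 0 = a 0 := by
    have h1 := val_at_zero hGsum
    rw [h1]
    exact if_pos (dvd_zero k)
  have ha0 : ‖a 0‖ < 1 := by
    have := val_at_zero hg
    rw [← this]
    exact hlt 0 (by simp)
  set a0 : ℂ := a 0 with ha0def
  set c : ℂ := (starRingEnd ℂ) a0 with hcdef
  set H : ℂ → ℂ := fun ξ => (a0 - G ξ) / (1 - c * G ξ) with hHdef
  have hGlt' : ∀ ξ ∈ ball (0:ℂ) 1, ‖G ξ‖ < 1 := by
    intro ξ hξ
    rw [mem_ball, dist_zero_right] at hξ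
    exact hGlt ξ hξ.le
  have hHlt : ∀ ξ ∈ ball (0:ℂ) 1, ‖H ξ‖ < 1 := by
    intro ξ hξ
    rw [hHdef]
    simp only []
    rw [norm_div, div_lt_one (norm_pos_iff.mpr (mobius_ne ha0 (hGlt' ξ hξ)))]
    exact mobius_lt ha0 (hGlt' ξ hξ)
  have hHd : DifferentiableOn ℂ H (ball (0:ℂ) 1) := by
    apply DifferentiableOn.div
    · exact (differentiableOn_const a0).sub hGd
    · exact (differentiableOn_const 1).sub ((differentiableOn_const c).mul hGd)
    · exact fun ξ hξ => mobius_ne ha0 (hGlt' ξ hξ)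
  obtain ⟨q, hq⟩ : AnalyticAt ℂ H 0 :=
    hHd.analyticAt (isOpen_ball.mem_nhds (mem_ball_self one_pos))
  -- partial sum of the series of G
  have hcoeffb : ∀ j : ℕ, (FormalMultilinearSeries.ofScalars ℂ b).coeff j = b j := by
    intro j
    show (FormalMultilinearSeries.ofScalars ℂ b j) (fun _ => (1:ℂ)) = b j
    rw [FormalMultilinearSeries.ofScalars_apply_eq]
    simp
  have hps : ∀ ξ : ℂ, (FormalMultilinearSeries.ofScalars ℂ b).partialSum (k+1) ξ
      = a0 + a k * ξ ^ k := by
    intro ξ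
    rw [FormalMultilinearSeries.partialSum]
    have hsub : ({0, k} : Finset ℕ) ⊆ Finset.range (k+1) := by
      intro x hx
      simp only [Finset.mem_insert, Finset.mem_singleton] at hx
      rcases hx with rfl | rfl <;> simp [Finset.mem_range] <;> omega
    rw [← Finset.sum_subset hsub]
    · rw [Finset.sum_insert (by simp; omega), Finset.sum_singleton]
      rw [FormalMultilinearSeries.apply_eq_pow_smul_coeff,
        FormalMultilinearSeries.apply_eq_pow_smul_coeff, hcoeffb, hcoeffb]
      have hb0 : b 0 = a 0 := if_pos (dvd_zero k)
      have hbk : b k = a k := if_pos (dvd_refl k)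
      rw [hb0, hbk]
      simp only [pow_zero, one_smul, smul_eq_mul]
      ring
    · intro x hx hnx
      rw [FormalMultilinearSeries.apply_eq_pow_smul_coeff, hcoeffb]
      simp only [Finset.mem_insert, Finset.mem_singleton, not_or] at hnx
      rw [Finset.mem_range] at hx
      have hnd : ¬ (k ∣ x) := by
        intro hdvd
        rcases hdvd with ⟨d, rfl⟩
        have hd01 : d = 0 ∨ d = 1 := by
          rcases Nat.lt_or_ge d 2 with h | h
          · omega
          · exfalso; have : k * 2 ≤ k * d := Nat.mul_le_mul_left k h; omega
        rcases hd01 with rfl | rfl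
        · exact hnx.1 (by ring)
        · exact hnx.2 (by ring)
      have hbx : b x = 0 := if_neg hnd
      rw [hbx, smul_zero]
  have hGtend : Filter.Tendsto (fun ξ : ℂ => (G ξ - a0) / ξ ^ k) (𝓝[≠] 0) (𝓝 (a k)) := by
    have h1 := tendsto_sub_partialSum hGfps.hasFPowerSeriesAt k
    have h2 : Filter.Tendsto (fun ξ : ℂ => (G ξ - (a0 + a k * ξ ^ k)) / ξ ^ k + a k)
        (𝓝[≠] 0) (𝓝 (0 + a k)) := by
      apply Filter.Tendsto.add _ tendsto_const_nhds
      apply h1.congr'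
      filter_upwards [self_mem_nhdsWithin] with ξ _
      rw [hps]
    rw [zero_add] at h2
    apply h2.congr'
    filter_upwards [self_mem_nhdsWithin] with ξ (hξ : ξ ≠ 0)
    field_simp
    ring
  have hGcont : Filter.Tendsto G (𝓝 0) (𝓝 a0) := by
    have := (hGd.differentiableAt (isOpen_ball.mem_nhds (mem_ball_self one_pos))).continuousAt
    rw [ContinuousAt, hG0] at this
    exact this
  have hden0 : 1 - c * a0 ≠ 0 := mobius_ne ha0 ha0
  have hdentend : Filter.Tendsto (fun ξ : ℂ => -(1 - c * G ξ)⁻¹) (𝓝[≠] 0)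
      (𝓝 (-(1 - c * a0)⁻¹)) := by
    apply Filter.Tendsto.neg
    apply Filter.Tendsto.inv₀ _ hden0
    exact (tendsto_const_nhds.sub (tendsto_const_nhds.mul hGcont)).mono_left nhdsWithin_le_nhds
  have hHlim : Filter.Tendsto (fun ξ : ℂ => H ξ / ξ ^ k) (𝓝[≠] 0)
      (𝓝 (a k * (-(1 - c * a0)⁻¹))) := by
    apply (hGtend.mul hdentend).congr'
    filter_upwards [self_mem_nhdsWithin] with ξ _
    rw [hHdef]
    simp only [div_eq_mul_inv]
    ring
  have hck : q.coeff k = a k * (-(1 - c * a0)⁻¹) := coeff_eq_of_tendsto hq hHlim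
  have hle : ‖q.coeff k‖ ≤ 1 := coeff_le_one hq hHd (fun ξ hξ => (hHlt ξ hξ).le) k
  rw [hck] at hle
  have hdenval : (1 : ℂ) - c * a0 = ((1 - ‖a0‖^2 : ℝ) : ℂ) := by
    rw [hcdef, Complex.conj_mul']
    push_cast
    ring
  have hA1 : 0 < 1 - ‖a0‖^2 := by nlinarith [norm_nonneg a0]
  rw [norm_mul, norm_neg, norm_inv, hdenval, Complex.norm_real,
    Real.norm_of_nonneg hA1.le] at hle
  calc ‖a k‖ = ‖a k‖ * (1 - ‖a0‖^2)⁻¹ * (1 - ‖a0‖^2) := by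
        rw [mul_assoc, inv_mul_cancel₀ hA1.ne', mul_one]
    _ ≤ 1 * (1 - ‖a0‖^2) := mul_le_mul_of_nonneg_right hle hA1.le
    _ = 1 - ‖a0‖^2 := one_mul _


/-- Multidimensional version of the refined Bohr inequality with `|f(z)|^p`
(Theorem 4 of Liu–Ponnusamy): if `Q ⊆ ℂⁿ` is an open complete circular domain
containing `0`, `f` holomorphic on `Q` with `|f| < 1`, expanded as `f = Σ_k P_k`
with `P_k` homogeneous of degree `k`, `p ∈ (0,2]`, `N ≥ 1`, then for `w ∈ Q` and
`r ∈ [0,1)` with `2(1+r)r^N ≤ p(1-r)²` one has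
`|f(r•w)|^p + Σ_{k≥N} |P_k(r•w)| ≤ 1`. -/
theorem stmt_5 (n : ℕ) (Q : Set (Fin n → ℂ)) (hQopen : IsOpen Q)
    (h0Q : (0 : Fin n → ℂ) ∈ Q)
    (hcirc : ∀ z ∈ Q, ∀ ξ : ℂ, ‖ξ‖ ≤ 1 → ξ • z ∈ Q)
    (f : (Fin n → ℂ) → ℂ) (hf : DifferentiableOn ℂ f Q)
    (hb : ∀ z ∈ Q, ‖f z‖ < 1)
    (P : ℕ → (Fin n → ℂ) → ℂ)
    (hhom : ∀ (k : ℕ) (ξ : ℂ) (z : Fin n → ℂ), P k (ξ • z) = ξ ^ k * P k z)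
    (hP0 : ∀ z : Fin n → ℂ, P 0 z = f 0)
    (hsum : ∀ z ∈ Q, HasSum (fun k : ℕ => P k z) (f z))
    (p : ℝ) (hp0 : 0 < p) (hp2 : p ≤ 2) (N : ℕ) (hN : 1 ≤ N)
    (w : Fin n → ℂ) (hw : w ∈ Q) (r : ℝ) (hr0 : 0 ≤ r) (hr1 : r < 1)
    (hcond : 2 * (1 + r) * r ^ N ≤ p * (1 - r) ^ 2) :
    Summable (fun k : ℕ => ‖P (k + N) ((r : ℂ) • w)‖) ∧
    ‖f ((r : ℂ) • w)‖ ^ p + ∑' k : ℕ, ‖P (k + N) ((r : ℂ) • w)‖ ≤ 1 := by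
  set a : ℕ → ℂ := fun m => P m w with hadef
  set g : ℂ → ℂ := fun ξ => f (ξ • w) with hgdef
  have hmem : ∀ ξ : ℂ, ‖ξ‖ ≤ 1 → ξ • w ∈ Q := fun ξ hξ => hcirc w hw ξ hξ
  have hg : ∀ ξ : ℂ, ‖ξ‖ ≤ 1 → HasSum (fun m => a m * ξ ^ m) (g ξ) := by
    intro ξ hξ
    have h1 := hsum (ξ • w) (hmem ξ hξ)
    have h2 : ∀ m, P m (ξ • w) = a m * ξ ^ m := fun m => by rw [hhom m ξ w]; ring
    exact (funext h2 : (fun m => P m (ξ • w)) = fun m => a m * ξ ^ m) ▸ h1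
  have hglt : ∀ ξ : ℂ, ‖ξ‖ ≤ 1 → ‖g ξ‖ < 1 := fun ξ hξ => hb _ (hmem ξ hξ)
  have hA : ‖a 0‖ < 1 := by
    have h1 : a 0 = f 0 := hP0 w
    rw [h1]
    exact hb 0 h0Q
  set A : ℝ := ‖a 0‖ with hAdef
  have hA0 : 0 ≤ A := norm_nonneg _
  have h1A : 0 ≤ 1 - A ^ 2 := by nlinarith
  have hWiener : ∀ m, 1 ≤ m → ‖a m‖ ≤ 1 - A ^ 2 := fun m hm => wiener hg hglt m hm
  have hterm : ∀ k : ℕ, ‖P (k + N) ((r : ℂ) • w)‖ = ‖a (k + N)‖ * r ^ (k + N) := by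
    intro k
    rw [hhom (k + N) (r : ℂ) w, norm_mul, norm_pow, Complex.norm_real,
      Real.norm_of_nonneg hr0]
    exact mul_comm _ _
  have hbound : ∀ k : ℕ, ‖a (k + N)‖ * r ^ (k + N) ≤ ((1 - A ^ 2) * r ^ N) * r ^ k := by
    intro k
    have h1 : ‖a (k + N)‖ ≤ 1 - A ^ 2 := hWiener (k + N) (by omega)
    have h2 : r ^ (k + N) = r ^ N * r ^ k := by rw [pow_add]; ring
    rw [h2, ← mul_assoc]
    apply mul_le_mul_of_nonneg_right _ (by positivity)
    exact mul_le_mul_of_nonneg_right h1 (by positivity)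
  have hgeom : Summable (fun k : ℕ => ((1 - A ^ 2) * r ^ N) * r ^ k) :=
    (summable_geometric_of_lt_one hr0 hr1).mul_left _
  have hsummable : Summable (fun k : ℕ => ‖P (k + N) ((r : ℂ) • w)‖) := by
    apply Summable.of_nonneg_of_le (fun k => norm_nonneg _) (fun k => ?_) hgeom
    rw [hterm k]
    exact hbound k
  refine ⟨hsummable, ?_⟩
  set T : ℝ := ∑' k : ℕ, ‖P (k + N) ((r : ℂ) • w)‖ with hTdef
  have hT0 : 0 ≤ T := tsum_nonneg (fun k => norm_nonneg _)
  have hT : T ≤ (1 - A ^ 2) * r ^ N * (1 - r)⁻¹ := by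
    have h2 : T ≤ ∑' k : ℕ, ((1 - A ^ 2) * r ^ N) * r ^ k := by
      apply hsummable.tsum_le_tsum _ hgeom
      intro k
      rw [hterm k]
      exact hbound k
    calc T ≤ ∑' k : ℕ, ((1 - A ^ 2) * r ^ N) * r ^ k := h2
      _ = ((1 - A ^ 2) * r ^ N) * ∑' k : ℕ, r ^ k := tsum_mul_left
      _ = (1 - A ^ 2) * r ^ N * (1 - r)⁻¹ := by rw [tsum_geometric_of_lt_one hr0 hr1]
  have hTr : T * (1 - r) ≤ (1 - A ^ 2) * r ^ N := by
    have h1r : (0:ℝ) < 1 - r := by linarith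
    have := mul_le_mul_of_nonneg_right hT h1r.le
    rwa [mul_assoc, inv_mul_cancel₀ h1r.ne', mul_one] at this
  have hfpsg := hasFPS_of_hasSum hg
  have hball : Metric.ball (0:ℂ) 1 ⊆ Metric.eball (0:ℂ) 1 := by
    intro x hx
    rw [Metric.mem_eball, edist_zero_right]
    rw [mem_ball, dist_zero_right] at hx
    rw [← ofReal_norm]
    exact ENNReal.ofReal_lt_one.mpr hx
  have hgd : DifferentiableOn ℂ g (ball (0:ℂ) 1) := hfpsg.differentiableOn.mono hball
  have hg0 : g 0 = a 0 := val_at_zero hg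
  have hgball : ∀ ξ ∈ ball (0:ℂ) 1, ‖g ξ‖ < 1 := by
    intro ξ hξ
    rw [mem_ball, dist_zero_right] at hξ
    exact hglt ξ hξ.le
  have hpick : ‖g (r:ℂ)‖ * (1 + A * r) ≤ A + r := pick hgd hg0 hgball hr0 hr1
  set X : ℝ := ‖g (r:ℂ)‖ with hXdef
  have hX0 : 0 ≤ X := norm_nonneg _
  have hrc : ‖(r:ℂ)‖ ≤ 1 := by
    rw [Complex.norm_real, Real.norm_of_nonneg hr0]
    exact hr1.le
  have hX1 : X < 1 := hglt _ hrc
  have hrpow : X ^ p ≤ p / 2 * X ^ 2 + (1 - p / 2) := by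
    have h1 := Real.geom_mean_le_arith_mean2_weighted (w₁ := p/2) (w₂ := 1 - p/2)
      (p₁ := X ^ 2) (p₂ := 1) (by linarith) (by linarith) (by positivity) zero_le_one
      (by ring)
    rw [Real.one_rpow, mul_one, mul_one] at h1
    have h2 : (X ^ 2 : ℝ) ^ ((p/2) : ℝ) = X ^ p := by
      rw [← Real.rpow_natCast X 2, ← Real.rpow_mul hX0]
      norm_num
      rw [show (2:ℝ) * (p/2) = p by ring]
    rwa [h2] at h1
  have e1 : (X * (1 + A * r)) ^ 2 ≤ (A + r) ^ 2 := by
    apply pow_le_pow_left₀ (by positivity) hpick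
  have e2 : (1 - A ^ 2) * (1 - r ^ 2) ≤ (1 - X ^ 2) * (1 + A * r) ^ 2 := by nlinarith [e1]
  have hcore : 2 * T ≤ p * (1 - X ^ 2) := by
    have h1r : (0:ℝ) < 1 - r := by linarith
    have hden : (0:ℝ) < (1 - r) * (1 + A * r) ^ 2 := by positivity
    refine le_of_mul_le_mul_right ?_ hden
    have hA1' : A ≤ 1 := hA.le
    calc 2 * T * ((1 - r) * (1 + A * r) ^ 2) = 2 * (T * (1 - r)) * (1 + A * r) ^ 2 := by ring
      _ ≤ 2 * ((1 - A ^ 2) * r ^ N) * (1 + A * r) ^ 2 := by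
          apply mul_le_mul_of_nonneg_right _ (by positivity)
          linarith
      _ ≤ 2 * ((1 - A ^ 2) * r ^ N) * (1 + r) ^ 2 := by
          apply mul_le_mul_of_nonneg_left _ (by positivity)
          nlinarith
      _ = (1 - A ^ 2) * (1 + r) * (2 * (1 + r) * r ^ N) := by ring
      _ ≤ (1 - A ^ 2) * (1 + r) * (p * (1 - r) ^ 2) := by
          apply mul_le_mul_of_nonneg_left hcond
          apply mul_nonneg h1A
          linarith
      _ = (p * (1 - r)) * ((1 - A ^ 2) * (1 - r ^ 2)) := by ring
      _ ≤ (p * (1 - r)) * ((1 - X ^ 2) * (1 + A * r) ^ 2) := by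
          apply mul_le_mul_of_nonneg_left e2
          positivity
      _ = p * (1 - X ^ 2) * ((1 - r) * (1 + A * r) ^ 2) := by ring
  linarith
end

section
/- Let Q ⊆ ℂⁿ be an open complete circular domain containing 0. Let f be holomorphic on Q with |f(z)| < 1 for all z ∈ Q, and suppose f(z) = Σ_{k=0}^∞ P_k(z) on Q, where each P_k is a homogeneous polynomial map of degree k. Let a = |f(0)| < 1 and p ∈ (0,2]. Then for every w ∈ Q and every r with 0 ≤ r ≤ R_p := p/(√(4p+1) + p + 1), one has |f(r•w)|^p + Σ_{k=1}^∞ |P_k(r•w)| + (1/(1+a) + r/(1−r)) · Σ_{k=1}^∞ |P_k(r•w)|² ≤ 1. -/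
open Metric Set Complex Finset ENNReal NNReal

lemma normSq_mobius (b z : ℂ) :
    Complex.normSq (1 - (starRingEnd ℂ) b * z) - Complex.normSq (b - z)
      = (1 - Complex.normSq b) * (1 - Complex.normSq z) := by
  simp only [Complex.normSq_apply, Complex.sub_re, Complex.sub_im, Complex.mul_re,
    Complex.mul_im, Complex.conj_re, Complex.conj_im, Complex.one_re, Complex.one_im]
  ring

lemma one_sub_ne {u : ℂ} (h : ‖u‖ < 1) : 1 - u ≠ 0 := by
  intro h0
  have : u = 1 := by linear_combination -h0
  simp [this] at h

lemma normSq_lt_one {b : ℂ} (hb : ‖b‖ < 1) : Complex.normSq b < 1 := by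
  rw [← Complex.sq_norm]
  nlinarith [norm_nonneg b]

lemma mobius_den_ne {b z : ℂ} (hb : ‖b‖ < 1) (hz : ‖z‖ < 1) :
    (1 : ℂ) - (starRingEnd ℂ) b * z ≠ 0 := by
  apply one_sub_ne
  rw [norm_mul, RCLike.norm_conj]
  nlinarith [norm_nonneg b, norm_nonneg z]

lemma mobius_norm_lt {b z : ℂ} (hb : ‖b‖ < 1) (hz : ‖z‖ < 1) :
    ‖(b - z) / (1 - (starRingEnd ℂ) b * z)‖ < 1 := by
  have hne := mobius_den_ne hb hz
  rw [norm_div, div_lt_one (by simpa [norm_pos_iff] using hne)]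
  have h1 : Complex.normSq (b - z) < Complex.normSq (1 - (starRingEnd ℂ) b * z) := by
    have h := normSq_mobius b z
    nlinarith [normSq_lt_one hb, normSq_lt_one hz, Complex.normSq_nonneg (b - z)]
  have e1 : ‖b - z‖ ^ 2 = Complex.normSq (b - z) := by
    rw [Complex.sq_norm]
  have e2 : ‖1 - (starRingEnd ℂ) b * z‖ ^ 2 = Complex.normSq (1 - (starRingEnd ℂ) b * z) := by
    rw [Complex.sq_norm]
  nlinarith [norm_nonneg (b - z), norm_nonneg (1 - (starRingEnd ℂ) b * z)]

section SP
variable {g : ℂ → ℂ}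

lemma sp_diff (hd : DifferentiableOn ℂ g (ball 0 1))
    (hg : ∀ z ∈ ball (0:ℂ) 1, ‖g z‖ < 1) :
    DifferentiableOn ℂ (fun ξ => (g 0 - g ξ) / (1 - (starRingEnd ℂ) (g 0) * g ξ)) (ball 0 1) := by
  have hb : ‖g 0‖ < 1 := hg 0 (mem_ball_self one_pos)
  exact DifferentiableOn.div ((differentiableOn_const _).sub hd)
    ((differentiableOn_const _).sub ((differentiableOn_const _).mul hd))
    (fun ξ hξ => mobius_den_ne hb (hg ξ hξ))

lemma sp_maps (hg : ∀ z ∈ ball (0:ℂ) 1, ‖g z‖ < 1) :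
    MapsTo (fun ξ => (g 0 - g ξ) / (1 - (starRingEnd ℂ) (g 0) * g ξ)) (ball 0 1) (ball 0 1) := by
  have hb : ‖g 0‖ < 1 := hg 0 (mem_ball_self one_pos)
  intro ξ hξ
  simpa [mem_ball_zero_iff] using mobius_norm_lt hb (hg ξ hξ)

lemma sp_zero (hg : ∀ z ∈ ball (0:ℂ) 1, ‖g z‖ < 1) :
    (fun ξ => (g 0 - g ξ) / (1 - (starRingEnd ℂ) (g 0) * g ξ)) 0 = 0 := by
  simp

lemma schwarz_pick_dist (hd : DifferentiableOn ℂ g (ball 0 1))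
    (hg : ∀ z ∈ ball (0:ℂ) 1, ‖g z‖ < 1) {z : ℂ} (hz : z ∈ ball (0:ℂ) 1) :
    ‖g 0 - g z‖ ≤ ‖z‖ * ‖1 - (starRingEnd ℂ) (g 0) * g z‖ := by
  have hb : ‖g 0‖ < 1 := hg 0 (mem_ball_self one_pos)
  have h := Complex.norm_le_norm_of_mapsTo_ball (sp_diff hd hg)
    ((sp_maps hg).mono_right ball_subset_closedBall)
    (sp_zero hg) (by simpa [mem_ball_zero_iff] using hz)
  simp only [norm_div] at h
  have hden : (0:ℝ) < ‖1 - (starRingEnd ℂ) (g 0) * g z‖ := by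
    simpa [norm_pos_iff] using mobius_den_ne hb (hg z hz)
  rw [div_le_iff₀ hden] at h
  linarith [h]

lemma schwarz_pick_abs (hd : DifferentiableOn ℂ g (ball 0 1))
    (hg : ∀ z ∈ ball (0:ℂ) 1, ‖g z‖ < 1) {z : ℂ} (hz : z ∈ ball (0:ℂ) 1) :
    ‖g z‖ * (1 + ‖g 0‖ * ‖z‖) ≤ ‖g 0‖ + ‖z‖ := by
  have hb : ‖g 0‖ < 1 := hg 0 (mem_ball_self one_pos)
  have hz1 : ‖z‖ < 1 := mem_ball_zero_iff.1 hz
  have h := schwarz_pick_dist hd hg hz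
  set b := g 0 with hbdef
  set W := g z with hWdef
  set A := ‖W‖; set a := ‖b‖; set r := ‖z‖
  -- square both sides
  have hsq : ‖b - W‖ ^ 2 ≤ r ^ 2 * ‖1 - (starRingEnd ℂ) b * W‖ ^ 2 := by
    have h0 : (0:ℝ) ≤ ‖b - W‖ := norm_nonneg _
    nlinarith [norm_nonneg (1 - (starRingEnd ℂ) b * W), norm_nonneg z]
  have e1 : ‖b - W‖ ^ 2 = Complex.normSq (b - W) := by rw [Complex.sq_norm]
  have e2 : ‖1 - (starRingEnd ℂ) b * W‖ ^ 2 = Complex.normSq (1 - (starRingEnd ℂ) b * W) := by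
    rw [Complex.sq_norm]
  -- expand normSq
  have ex1 : Complex.normSq (b - W) = Complex.normSq b - 2 * ((starRingEnd ℂ) b * W).re
      + Complex.normSq W := by
    simp only [Complex.normSq_apply, Complex.sub_re, Complex.sub_im, Complex.mul_re,
      Complex.mul_im, Complex.conj_re, Complex.conj_im]
    ring
  have ex2 : Complex.normSq (1 - (starRingEnd ℂ) b * W)
      = 1 - 2 * ((starRingEnd ℂ) b * W).re + Complex.normSq b * Complex.normSq W := by
    simp only [Complex.normSq_apply, Complex.sub_re, Complex.sub_im, Complex.mul_re,
      Complex.mul_im, Complex.conj_re, Complex.conj_im, Complex.one_re, Complex.one_im]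
    ring
  have hrebd : |((starRingEnd ℂ) b * W).re| ≤ a * A := by
    calc |((starRingEnd ℂ) b * W).re| ≤ ‖(starRingEnd ℂ) b * W‖ := Complex.abs_re_le_norm _
    _ = a * A := by rw [norm_mul, RCLike.norm_conj]
  have hnb : Complex.normSq b = a ^ 2 := (Complex.sq_norm b).symm
  have hnW : Complex.normSq W = A ^ 2 := (Complex.sq_norm W).symm
  rw [e1, e2, ex1, ex2, hnb, hnW] at hsq
  have habs := abs_le.1 hrebd
  -- key quadratic: A^2 (1 - a^2 r^2) - 2 a A (1 - r^2) - (r^2 - a^2) ≤ 0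
  have h1r2 : (0:ℝ) ≤ 1 - r ^ 2 := by nlinarith [norm_nonneg z]
  have hx := mul_le_mul_of_nonneg_right habs.2 h1r2
  have hkey : A ^ 2 * (1 - a ^ 2 * r ^ 2) - 2 * (a * A) * (1 - r ^ 2) - (r ^ 2 - a ^ 2) ≤ 0 := by
    nlinarith [hsq, hx]
  have ha0 : 0 ≤ a := norm_nonneg _
  have hA0 : 0 ≤ A := norm_nonneg _
  have hr0 : 0 ≤ r := norm_nonneg _
  have hA1 : A < 1 := hg z hz
  by_contra hcon
  push_neg at hcon
  have haA : a * A ≤ 1 := by nlinarith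
  have hF2 : 0 < A * (1 - a * r) - (a - r) := by
    nlinarith [mul_nonneg hr0 (sub_nonneg.2 haA)]
  nlinarith [mul_pos (show (0:ℝ) < A * (1 + a * r) - (a + r) by linarith) hF2, hkey]

end SP

lemma schwarz_pick_deriv {g : ℂ → ℂ} (hd : DifferentiableOn ℂ g (ball 0 1))
    (hg : ∀ z ∈ ball (0:ℂ) 1, ‖g z‖ < 1) :
    ‖deriv g 0‖ ≤ 1 - ‖g 0‖ ^ 2 := by
  have hb : ‖g 0‖ < 1 := hg 0 (mem_ball_self one_pos)
  set b := g 0 with hbdef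
  set h : ℂ → ℂ := fun ξ => (b - g ξ) / (1 - (starRingEnd ℂ) b * g ξ) with hhdef
  have hmaps : MapsTo h (ball 0 1) (ball (h 0) 1) := by
    have : h 0 = 0 := by simp [hhdef, hbdef]
    rw [this]; exact sp_maps hg
  have hsch : ‖deriv h 0‖ ≤ 1 / 1 :=
    Complex.norm_deriv_le_div_of_mapsTo_ball (sp_diff hd hg)
      (hmaps.mono_right ball_subset_closedBall) one_pos
  -- compute deriv h 0
  have hg0 : DifferentiableAt ℂ g 0 :=
    hd.differentiableAt (isOpen_ball.mem_nhds (mem_ball_self one_pos))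
  have hgd : HasDerivAt g (deriv g 0) 0 := hg0.hasDerivAt
  set d := deriv g 0 with hddef
  set u : ℂ := 1 - (starRingEnd ℂ) b * b with hudef
  have hune : u ≠ 0 := mobius_den_ne hb hb
  have hnum : HasDerivAt (fun ξ => b - g ξ) (-d) 0 := hgd.const_sub b
  have hden : HasDerivAt (fun ξ => 1 - (starRingEnd ℂ) b * g ξ)
      (-((starRingEnd ℂ) b * d)) 0 := (hgd.const_mul ((starRingEnd ℂ) b)).const_sub 1
  have hdiv := hnum.div hden (by simpa [hudef] using hune)
  have hdiv2 : HasDerivAt h (-d / u) 0 := by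
    refine hdiv.congr_deriv (Eq.symm ?_)
    rw [show b - g 0 = 0 from sub_self b]
    rw [← hbdef, ← hudef, zero_mul, sub_zero, sq, mul_div_mul_right _ _ hune]
  have hderiv : deriv h 0 = -d / u := hdiv2.deriv
  rw [hderiv] at hsch
  have hu : u = ((1 - Complex.normSq b : ℝ) : ℂ) := by
    rw [hudef, mul_comm, Complex.mul_conj]
    push_cast
    ring
  have hupos : (0:ℝ) < 1 - Complex.normSq b := by
    have : Complex.normSq b < 1 := by
      rw [← Complex.sq_norm]
      nlinarith [norm_nonneg b, hb]
    linarith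
  have hnu : ‖u‖ = 1 - Complex.normSq b := by
    rw [hu, Complex.norm_real, Real.norm_of_nonneg hupos.le]
  have : ‖-d / u‖ ≤ 1 := by rwa [one_div_one] at hsch
  rw [norm_div, norm_neg, hnu, div_le_one hupos] at this
  have : ‖d‖ ≤ 1 - Complex.normSq b := this
  rwa [← Complex.sq_norm] at this


lemma rpow_bound {t p : ℝ} (ht0 : 0 ≤ t) (ht1 : t ≤ 1) (hp0 : 0 < p) (hp2 : p ≤ 2) :
    t ^ p ≤ 1 - p / 2 * (1 - t ^ 2) := by
  have h1 : t ^ p = (t ^ 2) ^ (p / 2) := by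
    rw [← Real.rpow_natCast t 2, ← Real.rpow_mul ht0, show ((2:ℕ):ℝ) * (p / 2) = p by push_cast; ring]
  have hber : (1 + (t ^ 2 - 1)) ^ (p / 2) ≤ 1 + p / 2 * (t ^ 2 - 1) :=
    rpow_one_add_le_one_add_mul_self (by nlinarith) (by linarith) (by linarith)
  rw [h1]
  have : (1 : ℝ) + (t ^ 2 - 1) = t ^ 2 := by ring
  rw [this] at hber
  linarith

lemma r_cond {p r : ℝ} (hp0 : 0 < p) (hr0 : 0 ≤ r)
    (hr : r ≤ p / (Real.sqrt (4 * p + 1) + p + 1)) :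
    2 * r * (1 + r) ≤ p * (1 - r) ^ 2 := by
  set s := Real.sqrt (4 * p + 1) with hsdef
  have hs0 : 0 ≤ s := Real.sqrt_nonneg _
  have hs2 : s ^ 2 = 4 * p + 1 := Real.sq_sqrt (by linarith)
  have hden : 0 < s + p + 1 := by linarith
  have h1 : r * (s + p + 1) ≤ p := by rwa [← le_div_iff₀ hden]
  have h2 : 0 ≤ r * s := mul_nonneg hr0 hs0
  have h3 : r * s ≤ p - r * (p + 1) := by nlinarith
  have h4 : (r * s) ^ 2 ≤ (p - r * (p + 1)) ^ 2 := by nlinarith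
  have h5 : (r * s) ^ 2 = r ^ 2 * (4 * p + 1) := by
    rw [mul_pow, hs2]
  nlinarith [h4, h5, hp0, sq_nonneg r]

lemma poly_ineq {x r : ℝ} (hx0 : 0 ≤ x) (hxr : x ≤ r) (hr3 : 3 * r ≤ 1) :
    (1 + x) ^ 3 ≤ (2 + r + x) * (1 - r ^ 2) := by
  have hr0 : 0 ≤ r := le_trans hx0 hxr
  have hid : (2 + r + x) * (1 - r ^ 2) - (1 + x) ^ 3
      = (r - x) * (((1 + x) ^ 2 + (1 + x) * (1 + r) + (1 + r) ^ 2) - (1 - r ^ 2))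
        + (1 + r) ^ 2 * (1 - 3 * r) := by ring
  have hS : 0 ≤ ((1 + x) ^ 2 + (1 + x) * (1 + r) + (1 + r) ^ 2) - (1 - r ^ 2) := by nlinarith
  nlinarith [mul_nonneg (sub_nonneg.2 hxr) hS, mul_nonneg (sq_nonneg (1 + r)) (by linarith : (0:ℝ) ≤ 1 - 3 * r)]

lemma key_ineq {a r p : ℝ} (ha0 : 0 ≤ a) (ha1 : a < 1) (hr0 : 0 ≤ r)
    (hp0 : 0 < p) (hp2 : p ≤ 2) (hq : 2 * r * (1 + r) ≤ p * (1 - r) ^ 2) :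
    ((a + r) / (1 + a * r)) ^ p + (1 - a ^ 2) * (r / (1 - r))
      + (1 / (1 + a) + r / (1 - r)) * ((1 - a ^ 2) ^ 2 * (r ^ 2 / (1 - r ^ 2))) ≤ 1 := by
  have hr3 : 3 * r ≤ 1 := by nlinarith [mul_nonneg (by linarith : (0:ℝ) ≤ 2 - p) (sq_nonneg (1 - r))]
  have hr1 : r < 1 := by linarith
  have h1r : (0:ℝ) < 1 - r := by linarith
  have h1r2 : (0:ℝ) < 1 - r ^ 2 := by nlinarith
  have h1a : (0:ℝ) < 1 + a := by linarith
  have h1ar : (0:ℝ) < 1 + a * r := by nlinarith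
  have h1a2 : (0:ℝ) < 1 - a ^ 2 := by nlinarith
  set A := (a + r) / (1 + a * r) with hAdef
  have hA0 : 0 ≤ A := div_nonneg (by linarith) h1ar.le
  have hA1 : A ≤ 1 := by
    rw [hAdef, div_le_one h1ar]
    nlinarith
  have step1 : A ^ p ≤ 1 - p / 2 * (1 - A ^ 2) := rpow_bound hA0 hA1 hp0 hp2
  have step2 : 1 - A ^ 2 = (1 - a ^ 2) * (1 - r ^ 2) / (1 + a * r) ^ 2 := by
    rw [hAdef]
    field_simp
    ring
  -- main2
  have hX0 : 0 ≤ (1 - a ^ 2) * (1 - r ^ 2) / (1 + a * r) ^ 2 := by positivity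
  have hhalf : r * (1 + r) / (1 - r) ^ 2 ≤ p / 2 := by
    rw [div_le_div_iff₀ (by positivity) (by norm_num)]
    nlinarith
  have main3 : (1 - a ^ 2) * (r / (1 - r))
      + (1 / (1 + a) + r / (1 - r)) * ((1 - a ^ 2) ^ 2 * (r ^ 2 / (1 - r ^ 2)))
      ≤ r * (1 + r) / (1 - r) ^ 2 * ((1 - a ^ 2) * (1 - r ^ 2) / (1 + a * r) ^ 2) := by
    rw [← sub_nonneg]
    have hcert : r * (1 + r) / (1 - r) ^ 2 * ((1 - a ^ 2) * (1 - r ^ 2) / (1 + a * r) ^ 2)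
        - ((1 - a ^ 2) * (r / (1 - r))
          + (1 / (1 + a) + r / (1 - r)) * ((1 - a ^ 2) ^ 2 * (r ^ 2 / (1 - r ^ 2))))
        = (1 - a ^ 2) * (1 - a) * r ^ 2
            * ((2 + r + a * r) * (1 - r ^ 2) - (1 + a * r) ^ 3)
            / ((1 - r) * (1 - r ^ 2) * (1 + a * r) ^ 2) := by
      field_simp
      ring
    rw [hcert]
    apply div_nonneg _ (by positivity)
    have hpoly := poly_ineq (mul_nonneg ha0 hr0) (by nlinarith : a * r ≤ r) hr3
    have h0 : 0 ≤ (2 + r + a * r) * (1 - r ^ 2) - (1 + a * r) ^ 3 := by linarith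
    exact mul_nonneg (mul_nonneg (mul_nonneg h1a2.le (by linarith)) (sq_nonneg r)) h0
  have main2 : (1 - a ^ 2) * (r / (1 - r))
      + (1 / (1 + a) + r / (1 - r)) * ((1 - a ^ 2) ^ 2 * (r ^ 2 / (1 - r ^ 2)))
      ≤ p / 2 * ((1 - a ^ 2) * (1 - r ^ 2) / (1 + a * r) ^ 2) :=
    le_trans main3 (mul_le_mul_of_nonneg_right hhalf hX0)
  rw [step2] at step1
  linarith

lemma wiener_s7 {g : ℂ → ℂ} (hd : DifferentiableOn ℂ g (ball 0 1))
    (hg : ∀ z ∈ ball (0:ℂ) 1, ‖g z‖ < 1)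
    {c : ℕ → ℂ} (hc : ∀ z ∈ ball (0:ℂ) 1, HasSum (fun k => c k * z ^ k) (g z))
    (hcs : Summable c) {k : ℕ} (hk : 0 < k) :
    ‖c k‖ ≤ 1 - ‖c 0‖ ^ 2 := by
  classical
  have hcn : Summable fun j => ‖c j‖ := summable_norm_iff.2 hcs
  set M : ℝ := ∑' j, ‖c j‖ with hMdef
  have hM : ∀ j, ‖c j‖ ≤ M := fun j => hcn.le_tsum j (fun _ _ => norm_nonneg _)
  set F : FormalMultilinearSeries ℂ ℂ ℂ :=
    FormalMultilinearSeries.ofScalars ℂ (fun m => c (k * m)) with hFdef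
  have hFnorm : ∀ m : ℕ, ‖F m‖ = ‖c (k * m)‖ := fun m =>
    FormalMultilinearSeries.ofScalars_norm ℂ _ m
  have hFrad : (1 : ℝ≥0∞) ≤ F.radius := by
    have := F.le_radius_of_bound M (r := 1) (fun m => by
      rw [hFnorm m]; simpa using hM (k * m))
    simpa using this
  set H : ℂ → ℂ := F.sum with hHdef
  have hH : HasFPowerSeriesOnBall H F 0 1 :=
    (F.hasFPowerSeriesOnBall (lt_of_lt_of_le one_pos hFrad)).mono one_pos hFrad
  have hball : Metric.eball (0:ℂ) (1:ℝ≥0∞) = ball (0:ℂ) 1 := by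
    simpa using Metric.emetric_ball_nnreal (x := (0:ℂ)) (ε := 1)
  have hHsum : ∀ ζ : ℂ, ‖ζ‖ < 1 → HasSum (fun m => c (k * m) * ζ ^ m) (H ζ) := by
    intro ζ hζ
    have hmem : ζ ∈ Metric.eball (0:ℂ) 1 := by
      rw [hball]; exact mem_ball_zero_iff.2 hζ
    have := hH.hasSum hmem
    have h2 : (fun n => F n fun _ => ζ) = fun m => c (k * m) * ζ ^ m := by
      funext m
      rw [hFdef, FormalMultilinearSeries.ofScalars_apply_eq, smul_eq_mul]
    rw [h2] at this
    simpa using this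
  have hHd : DifferentiableOn ℂ H (ball 0 1) := by
    have := hH.differentiableOn
    rwa [hball] at this
  have hHb : ∀ ζ ∈ ball (0:ℂ) 1, ‖H ζ‖ < 1 := by
    intro ζ hζ
    rw [mem_ball_zero_iff] at hζ
    obtain ⟨ξ, hξk⟩ := IsAlgClosed.exists_pow_nat_eq ζ hk
    have hξ1 : ‖ξ‖ < 1 := by
      by_contra hcon
      push_neg at hcon
      have : (1:ℝ) ≤ ‖ξ‖ ^ k := one_le_pow₀ hcon
      rw [← norm_pow, hξk] at this
      linarith
    set ω : ℂ := Complex.exp (2 * Real.pi * Complex.I / k) with hωdef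
    have hω : IsPrimitiveRoot ω k := Complex.isPrimitiveRoot_exp k hk.ne'
    have hωnorm : ‖ω‖ = 1 := by
      have h1 : ‖ω‖ ^ k = 1 := by rw [← norm_pow, hω.pow_eq_one, norm_one]
      have h0 : (0:ℝ) ≤ ‖ω‖ := norm_nonneg _
      rcases lt_trichotomy ‖ω‖ 1 with h | h | h
      · exfalso; nlinarith [pow_lt_one₀ h0 h hk.ne']
      · exact h
      · exfalso; nlinarith [one_lt_pow₀ h hk.ne']
    have hmemj : ∀ j : ℕ, ω ^ j * ξ ∈ ball (0:ℂ) 1 := by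
      intro j
      rw [mem_ball_zero_iff, norm_mul, norm_pow, hωnorm, one_pow, one_mul]
      exact hξ1
    -- finite sum of HasSum
    have hS : HasSum (fun n => (k:ℂ)⁻¹ * ∑ j ∈ range k, c n * (ω ^ j * ξ) ^ n)
        ((k:ℂ)⁻¹ * ∑ j ∈ range k, g (ω ^ j * ξ)) :=
      (hasSum_sum (fun j _ => hc _ (hmemj j))).mul_left _
    have hkne : (k:ℂ) ≠ 0 := Nat.cast_ne_zero.2 hk.ne'
    -- termwise: equals filtered series
    have hterm : ∀ n : ℕ, (k:ℂ)⁻¹ * ∑ j ∈ range k, c n * (ω ^ j * ξ) ^ n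
        = if k ∣ n then c n * ξ ^ n else 0 := by
      intro n
      have : ∑ j ∈ range k, c n * (ω ^ j * ξ) ^ n
          = (c n * ξ ^ n) * ∑ j ∈ range k, (ω ^ n) ^ j := by
        rw [Finset.mul_sum]
        congr 1; funext j
        rw [mul_pow, ← pow_mul, ← pow_mul, mul_comm j n]
        ring
      rw [this]
      by_cases hdvd : k ∣ n
      · have hω1 : ω ^ n = 1 := (hω.pow_eq_one_iff_dvd n).2 hdvd
        rw [if_pos hdvd, hω1]
        simp only [one_pow, Finset.sum_const, Finset.card_range, nsmul_eq_mul]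
        rw [mul_comm ((k:ℂ)) _] at *
        field_simp
      · have hω1 : ω ^ n ≠ 1 := fun h => hdvd ((hω.pow_eq_one_iff_dvd n).1 h)
        rw [if_neg hdvd, geom_sum_eq hω1, ← pow_mul, mul_comm n k, pow_mul, hω.pow_eq_one,
          one_pow, sub_self, zero_div, mul_zero, mul_zero]
    have hS2 : HasSum (fun n => if k ∣ n then c n * ξ ^ n else 0)
        ((k:ℂ)⁻¹ * ∑ j ∈ range k, g (ω ^ j * ξ)) := by
      have := hS
      simp_rw [hterm] at this
      exact this
    -- relate to H ζ via injection m ↦ k * m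
    have hinj : Function.Injective (fun m : ℕ => k * m) := fun a b h => by
      exact Nat.eq_of_mul_eq_mul_left hk h
    have hsupp : ∀ n ∉ Set.range (fun m : ℕ => k * m),
        (if k ∣ n then c n * ξ ^ n else 0) = 0 := by
      intro n hn
      rw [if_neg]
      intro ⟨m, hm⟩
      exact hn ⟨m, hm.symm⟩
    have hcomp : HasSum ((fun n => if k ∣ n then c n * ξ ^ n else 0) ∘ (fun m : ℕ => k * m))
        (H ζ) := by
      have h1 := hHsum ζ hζ
      have : ((fun n => if k ∣ n then c n * ξ ^ n else 0) ∘ (fun m : ℕ => k * m))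
          = fun m => c (k * m) * ζ ^ m := by
        funext m
        simp only [Function.comp_apply, if_pos (Dvd.intro m rfl)]
        rw [← hξk, ← pow_mul]
      rw [this]
      exact h1
    have hHeq : H ζ = (k:ℂ)⁻¹ * ∑ j ∈ range k, g (ω ^ j * ξ) :=
      ((hinj.hasSum_iff hsupp).1 hcomp).unique hS2
    rw [hHeq, norm_mul]
    have hsumlt : ∑ j ∈ range k, ‖g (ω ^ j * ξ)‖ < k := by
      calc ∑ j ∈ range k, ‖g (ω ^ j * ξ)‖ < ∑ j ∈ range k, 1 :=
        Finset.sum_lt_sum_of_nonempty (by simp [Finset.nonempty_range_iff, hk.ne']) (fun j _ => hg _ (hmemj j))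
      _ = k := by simp
    have hnormsum : ‖∑ j ∈ range k, g (ω ^ j * ξ)‖ ≤ ∑ j ∈ range k, ‖g (ω ^ j * ξ)‖ :=
      norm_sum_le _ _
    have hkinv : ‖(k:ℂ)⁻¹‖ = (k:ℝ)⁻¹ := by
      rw [norm_inv, Complex.norm_natCast]
    rw [hkinv]
    have hkpos : (0:ℝ) < k := Nat.cast_pos.2 hk
    calc (k:ℝ)⁻¹ * ‖∑ j ∈ range k, g (ω ^ j * ξ)‖
        ≤ (k:ℝ)⁻¹ * ∑ j ∈ range k, ‖g (ω ^ j * ξ)‖ := by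
          apply mul_le_mul_of_nonneg_left hnormsum (by positivity)
      _ < (k:ℝ)⁻¹ * k := by
          apply mul_lt_mul_of_pos_left hsumlt (by positivity)
      _ = 1 := inv_mul_cancel₀ hkpos.ne'
  -- now apply Schwarz-Pick derivative to H
  have hmain := schwarz_pick_deriv hHd hHb
  have hH0 : H 0 = c 0 := by
    have h1 := hHsum 0 (by norm_num)
    have h2 : HasSum (fun m => c (k * m) * (0:ℂ) ^ m) (c 0) := by
      have := hasSum_single (f := fun m => c (k * m) * (0:ℂ) ^ m) 0
        (fun m hm => by simp [zero_pow hm])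
      simpa using this
    exact h1.unique h2
  have hderiv : deriv H 0 = c k := by
    have := hH.hasFPowerSeriesAt.deriv
    rw [this, hFdef]
    have := FormalMultilinearSeries.ofScalars_apply_eq (𝕜 := ℂ) (E := ℂ)
      (fun m => c (k * m)) 1 1
    simpa using this
  rw [hH0, hderiv] at hmain
  exact hmain


/-- Corollary of Theorem 5 of Liu–Ponnusamy:
if `Q ⊆ ℂⁿ` is an open complete circular domain containing `0`, `f` holomorphic on `Q`
with `|f| < 1`, expanded as `f = Σ_k P_k` with `P_k` homogeneous of degree `k`,
`a = |f(0)| < 1`, `p ∈ (0,2]`, then for `w ∈ Q` and `0 ≤ r ≤ R_p = p/(√(4p+1)+p+1)`,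
`|f(r•w)|^p + Σ_{k≥1} |P_k(r•w)| + (1/(1+a) + r/(1-r)) Σ_{k≥1} |P_k(r•w)|² ≤ 1`. -/
theorem stmt_7 (n : ℕ) (Q : Set (Fin n → ℂ)) (hQopen : IsOpen Q)
    (h0Q : (0 : Fin n → ℂ) ∈ Q)
    (hcirc : ∀ z ∈ Q, ∀ ξ : ℂ, ‖ξ‖ ≤ 1 → ξ • z ∈ Q)
    (f : (Fin n → ℂ) → ℂ) (hf : DifferentiableOn ℂ f Q)
    (hb : ∀ z ∈ Q, ‖f z‖ < 1)
    (P : ℕ → (Fin n → ℂ) → ℂ)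
    (hhom : ∀ (k : ℕ) (ξ : ℂ) (z : Fin n → ℂ), P k (ξ • z) = ξ ^ k * P k z)
    (hP0 : ∀ z : Fin n → ℂ, P 0 z = f 0)
    (hsum : ∀ z ∈ Q, HasSum (fun k : ℕ => P k z) (f z))
    (ha : ‖f 0‖ < 1) (p : ℝ) (hp0 : 0 < p) (hp2 : p ≤ 2)
    (w : Fin n → ℂ) (hw : w ∈ Q) (r : ℝ) (hr0 : 0 ≤ r)
    (hr : r ≤ p / (Real.sqrt (4 * p + 1) + p + 1)) :
    Summable (fun k : ℕ => ‖P (k + 1) ((r : ℂ) • w)‖) ∧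
    Summable (fun k : ℕ => ‖P (k + 1) ((r : ℂ) • w)‖ ^ 2) ∧
    ‖f ((r : ℂ) • w)‖ ^ p + (∑' k : ℕ, ‖P (k + 1) ((r : ℂ) • w)‖) +
      (1 / (1 + ‖f 0‖) + r / (1 - r)) *
        ∑' k : ℕ, ‖P (k + 1) ((r : ℂ) • w)‖ ^ 2 ≤ 1 := by
  have hq : 2 * r * (1 + r) ≤ p * (1 - r) ^ 2 := r_cond hp0 hr0 hr
  have hr3 : 3 * r ≤ 1 := by
    nlinarith [mul_nonneg (by linarith : (0:ℝ) ≤ 2 - p) (sq_nonneg (1 - r))]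
  have hr1 : r < 1 := by linarith
  set c : ℕ → ℂ := fun k => P k w with hcdef
  set g : ℂ → ℂ := fun ξ => f (ξ • w) with hgdef
  have hmem : ∀ ξ : ℂ, ‖ξ‖ ≤ 1 → ξ • w ∈ Q := fun ξ hξ => hcirc w hw ξ hξ
  have hgball : ∀ ξ ∈ ball (0:ℂ) 1, ‖g ξ‖ < 1 := fun ξ hξ =>
    hb _ (hmem ξ (mem_ball_zero_iff.1 hξ).le)
  have hgd : DifferentiableOn ℂ g (ball 0 1) := by
    apply DifferentiableOn.comp hf
      ((differentiable_id.smul_const w).differentiableOn)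
      (fun ξ hξ => hmem ξ (mem_ball_zero_iff.1 hξ).le)
  have hgsum : ∀ ξ : ℂ, ‖ξ‖ ≤ 1 → HasSum (fun k => c k * ξ ^ k) (g ξ) := by
    intro ξ hξ
    have h1 := hsum (ξ • w) (hmem ξ hξ)
    have h2 : (fun k => P k (ξ • w)) = fun k => c k * ξ ^ k := by
      funext k
      rw [hhom k ξ w, mul_comm]
    rwa [h2] at h1
  have hg0 : g 0 = f 0 := by rw [hgdef]; simp
  have hc0 : c 0 = f 0 := hP0 w
  have hsummc : Summable c := by
    have := (hgsum 1 (by norm_num)).summable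
    simpa using this
  have ha0 : (0:ℝ) ≤ ‖f 0‖ := norm_nonneg _
  have hwiener : ∀ k : ℕ, ‖c (k + 1)‖ ≤ 1 - ‖f 0‖ ^ 2 := by
    intro k
    have := wiener_s7 hgd hgball (fun z hz => hgsum z (mem_ball_zero_iff.1 hz).le)
      hsummc (Nat.succ_pos k)
    rwa [hc0] at this
  have hnorm : ∀ k : ℕ, ‖P (k + 1) ((r : ℂ) • w)‖ = ‖c (k + 1)‖ * r ^ (k + 1) := by
    intro k
    rw [hhom (k + 1) (r : ℂ) w, norm_mul, norm_pow, Complex.norm_real,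
      Real.norm_of_nonneg hr0, mul_comm]
  have hfun1 : (fun k : ℕ => ‖P (k + 1) ((r : ℂ) • w)‖)
      = fun k => ‖c (k + 1)‖ * r ^ (k + 1) := funext hnorm
  have hfun2 : (fun k : ℕ => ‖P (k + 1) ((r : ℂ) • w)‖ ^ 2)
      = fun k => (‖c (k + 1)‖ * r ^ (k + 1)) ^ 2 := by
    funext k; rw [hnorm k]
  have h1a2 : (0:ℝ) ≤ 1 - ‖f 0‖ ^ 2 := by nlinarith
  have hgeo : Summable (fun k : ℕ => r ^ (k + 1)) := by
    have := (summable_geometric_of_lt_one hr0 hr1).mul_right r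
    simpa [pow_succ] using this
  have hr20 : (0:ℝ) ≤ r ^ 2 := sq_nonneg r
  have hr21 : r ^ 2 < 1 := by nlinarith
  have hgeo2 : Summable (fun k : ℕ => (r ^ 2) ^ (k + 1)) := by
    have := (summable_geometric_of_lt_one hr20 hr21).mul_right (r ^ 2)
    simpa [pow_succ] using this
  have hle1 : ∀ k : ℕ, ‖c (k + 1)‖ * r ^ (k + 1) ≤ (1 - ‖f 0‖ ^ 2) * r ^ (k + 1) :=
    fun k => mul_le_mul_of_nonneg_right (hwiener k) (pow_nonneg hr0 _)
  have hle1' : ∀ k : ℕ, ‖c (k + 1)‖ * r ^ (k + 1) ≤ r ^ (k + 1) := by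
    intro k
    have h2 : ‖c (k + 1)‖ ≤ 1 := by nlinarith [hwiener k]
    calc ‖c (k + 1)‖ * r ^ (k + 1) ≤ 1 * r ^ (k + 1) :=
      mul_le_mul_of_nonneg_right h2 (pow_nonneg hr0 _)
    _ = r ^ (k + 1) := one_mul _
  have hS1 : Summable (fun k : ℕ => ‖c (k + 1)‖ * r ^ (k + 1)) :=
    Summable.of_nonneg_of_le (fun k => by positivity) hle1' hgeo
  have hle2 : ∀ k : ℕ, (‖c (k + 1)‖ * r ^ (k + 1)) ^ 2
      ≤ (1 - ‖f 0‖ ^ 2) ^ 2 * (r ^ 2) ^ (k + 1) := by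
    intro k
    have h0 : 0 ≤ ‖c (k + 1)‖ * r ^ (k + 1) := by positivity
    have h1 := hle1 k
    calc (‖c (k + 1)‖ * r ^ (k + 1)) ^ 2 ≤ ((1 - ‖f 0‖ ^ 2) * r ^ (k + 1)) ^ 2 := by nlinarith
    _ = (1 - ‖f 0‖ ^ 2) ^ 2 * (r ^ 2) ^ (k + 1) := by
        rw [mul_pow, ← pow_mul, ← pow_mul, mul_comm 2 (k + 1)]
  have hle2' : ∀ k : ℕ, (‖c (k + 1)‖ * r ^ (k + 1)) ^ 2 ≤ (r ^ 2) ^ (k + 1) := by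
    intro k
    have h0 : 0 ≤ ‖c (k + 1)‖ * r ^ (k + 1) := by positivity
    have h1 := hle1' k
    calc (‖c (k + 1)‖ * r ^ (k + 1)) ^ 2 ≤ (r ^ (k + 1)) ^ 2 := by nlinarith
    _ = (r ^ 2) ^ (k + 1) := by rw [← pow_mul, ← pow_mul, mul_comm 2 (k + 1)]
  have hS2 : Summable (fun k : ℕ => (‖c (k + 1)‖ * r ^ (k + 1)) ^ 2) :=
    Summable.of_nonneg_of_le (fun k => by positivity) hle2' hgeo2
  -- tsum bounds
  have hgeo_sum : ∑' k : ℕ, r ^ (k + 1) = r / (1 - r) := by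
    calc ∑' k : ℕ, r ^ (k + 1) = ∑' k : ℕ, r ^ k * r := by simp [pow_succ]
    _ = (1 - r)⁻¹ * r := by rw [_root_.tsum_mul_right, tsum_geometric_of_lt_one hr0 hr1]
    _ = r / (1 - r) := by ring
  have hgeo2_sum : ∑' k : ℕ, (r ^ 2) ^ (k + 1) = r ^ 2 / (1 - r ^ 2) := by
    calc ∑' k : ℕ, (r ^ 2) ^ (k + 1) = ∑' k : ℕ, (r ^ 2) ^ k * r ^ 2 := by simp [pow_succ]
    _ = (1 - r ^ 2)⁻¹ * r ^ 2 := by rw [_root_.tsum_mul_right, tsum_geometric_of_lt_one hr20 hr21]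
    _ = r ^ 2 / (1 - r ^ 2) := by ring
  have hT1 : ∑' k : ℕ, ‖c (k + 1)‖ * r ^ (k + 1) ≤ (1 - ‖f 0‖ ^ 2) * (r / (1 - r)) := by
    calc ∑' k : ℕ, ‖c (k + 1)‖ * r ^ (k + 1)
        ≤ ∑' k : ℕ, (1 - ‖f 0‖ ^ 2) * r ^ (k + 1) :=
          hS1.tsum_le_tsum hle1 (hgeo.mul_left _)
    _ = (1 - ‖f 0‖ ^ 2) * (r / (1 - r)) := by rw [_root_.tsum_mul_left, hgeo_sum]
  have hT2 : ∑' k : ℕ, (‖c (k + 1)‖ * r ^ (k + 1)) ^ 2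
      ≤ (1 - ‖f 0‖ ^ 2) ^ 2 * (r ^ 2 / (1 - r ^ 2)) := by
    calc ∑' k : ℕ, (‖c (k + 1)‖ * r ^ (k + 1)) ^ 2
        ≤ ∑' k : ℕ, (1 - ‖f 0‖ ^ 2) ^ 2 * (r ^ 2) ^ (k + 1) :=
          hS2.tsum_le_tsum hle2 (hgeo2.mul_left _)
    _ = (1 - ‖f 0‖ ^ 2) ^ 2 * (r ^ 2 / (1 - r ^ 2)) := by rw [_root_.tsum_mul_left, hgeo2_sum]
  -- value bound
  have hrnorm : ‖((r : ℝ) : ℂ)‖ = r := by rw [Complex.norm_real, Real.norm_of_nonneg hr0]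
  have hzball : ((r : ℝ) : ℂ) ∈ ball (0:ℂ) 1 := mem_ball_zero_iff.2 (by rw [hrnorm]; exact hr1)
  have hv := schwarz_pick_abs hgd hgball hzball
  rw [hg0, hrnorm] at hv
  have h1ar : (0:ℝ) < 1 + ‖f 0‖ * r := by positivity
  have hval : ‖f ((r : ℂ) • w)‖ ≤ (‖f 0‖ + r) / (1 + ‖f 0‖ * r) := by
    rw [le_div_iff₀ h1ar]
    exact hv
  have hvp : ‖f ((r : ℂ) • w)‖ ^ p ≤ ((‖f 0‖ + r) / (1 + ‖f 0‖ * r)) ^ p :=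
    Real.rpow_le_rpow (norm_nonneg _) hval hp0.le
  have hkey := key_ineq ha0 ha hr0 hp0 hp2 hq
  have hcoef : (0:ℝ) ≤ 1 / (1 + ‖f 0‖) + r / (1 - r) :=
    add_nonneg (by positivity) (div_nonneg hr0 (by linarith))
  refine ⟨by rw [hfun1]; exact hS1, by rw [hfun2]; exact hS2, ?_⟩
  rw [hfun1, hfun2]
  have hmul := mul_le_mul_of_nonneg_left hT2 hcoef
  linarith [hvp, hkey, hT1, hmul]
end

section
/- For every a ∈ [0,1), the number r = 2/(3 + a + √5(1 + a)) lies in (0,1), satisfies A_{a,1}(r) = 0 where A_{a,1}(r) = [1 − (2 − a²)r](1 + a r) − (1 − r)(r + a), and is the minimum positive root of A_{a,1}; moreover inf_{a ∈ [0,1)} 2/(3 + a + √5(1 + a)) = √5 − 2. -/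
/-- Remark after Theorem 5 of Liu–Ponnusamy, case `p = 1`: for every `a ∈ [0,1)` the
number `r = 2/(3 + a + √5(1 + a))` lies in `(0,1)`, satisfies `A_{a,1}(r) = 0` where
`A_{a,1}(r) = [1-(2-a²)r](1+ar) - (1-r)(r+a)`, is the minimum positive root of
`A_{a,1}`, and `inf_{a ∈ [0,1)} 2/(3 + a + √5(1 + a)) = √5 - 2`. -/
theorem stmt_8 :
    (∀ a : ℝ, a ∈ Set.Ico (0 : ℝ) 1 →
      (2 / (3 + a + Real.sqrt 5 * (1 + a)) ∈ Set.Ioo (0 : ℝ) 1 ∧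
       (1 - (2 - a ^ 2) * (2 / (3 + a + Real.sqrt 5 * (1 + a)))) *
           (1 + a * (2 / (3 + a + Real.sqrt 5 * (1 + a)))) -
         (1 - 2 / (3 + a + Real.sqrt 5 * (1 + a))) *
           (2 / (3 + a + Real.sqrt 5 * (1 + a)) + a) = 0 ∧
       ∀ r' : ℝ, 0 < r' →
         (1 - (2 - a ^ 2) * r') * (1 + a * r') - (1 - r') * (r' + a) = 0 →
         2 / (3 + a + Real.sqrt 5 * (1 + a)) ≤ r')) ∧
    IsGLB ((fun a : ℝ => 2 / (3 + a + Real.sqrt 5 * (1 + a))) '' Set.Ico (0 : ℝ) 1)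
      (Real.sqrt 5 - 2) := by
  have h5 : (0:ℝ) ≤ 5 := by norm_num
  set s := Real.sqrt 5 with hs
  have hs2 : s ^ 2 = 5 := Real.sq_sqrt h5
  have hsnn : 0 ≤ s := Real.sqrt_nonneg 5
  have h2s : 2 < s := by nlinarith
  have hfac : ∀ a x : ℝ,
      (1 - (2 - a ^ 2) * x) * (1 + a * x) - (1 - x) * (x + a)
        = -(a - 1) / 4 * (((3 + a + s * (1 + a)) * x - 2) * ((3 + a - s * (1 + a)) * x - 2)) := by
    intro a x
    linear_combination (-((a - 1) / 4) * (1 + a) ^ 2 * x ^ 2) * hs2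
  constructor
  · intro a ⟨ha0, ha1⟩
    have hd : 0 < 3 + a + s * (1 + a) := by nlinarith
    have hdne : (3 + a + s * (1 + a)) ≠ 0 := ne_of_gt hd
    have hfirst : (3 + a + s * (1 + a)) * (2 / (3 + a + s * (1 + a))) - 2 = 0 := by
      field_simp
      ring
    refine ⟨⟨by positivity, ?_⟩, ?_, ?_⟩
    · rw [div_lt_one hd]; nlinarith
    · rw [hfac, hfirst, zero_mul, mul_zero]
    · intro r' hr' heq
      rw [hfac] at heq
      have ha1' : -(a - 1) / 4 ≠ 0 := by
        intro h; rw [div_eq_zero_iff] at h; rcases h with h|h <;> linarith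
      have hprod := (mul_eq_zero.1 heq).resolve_left ha1'
      rcases mul_eq_zero.1 hprod with h | h
      · have : 2 = (3 + a + s * (1 + a)) * r' := by linarith
        rw [div_le_iff₀ hd]; nlinarith
      · have h2 : (3 + a - s * (1 + a)) * r' = 2 := by linarith
        rw [div_le_iff₀ hd]
        nlinarith [mul_nonneg (mul_nonneg hsnn (by linarith : (0:ℝ) ≤ 1 + a)) hr'.le]
  · constructor
    · rintro x ⟨a, ⟨ha0, ha1⟩, rfl⟩
      have hd : 0 < 3 + a + s * (1 + a) := by nlinarith
      rw [le_div_iff₀ hd]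
      nlinarith [mul_nonneg (mul_nonneg (by linarith : (0:ℝ) ≤ s - 2)
        (by linarith : (0:ℝ) ≤ 1 - a)) (by linarith : (0:ℝ) ≤ 1 + s)]
    · intro b hb
      by_contra hcon
      push_neg at hcon
      have hb0 : 0 < b := by linarith
      set δ : ℝ := min (1/2) ((b - s + 2) / (b * (1 + s))) with hδ
      have hnum : 0 < b - s + 2 := by linarith
      have hden : 0 < b * (1 + s) := by positivity
      have hδpos : 0 < δ := lt_min (by norm_num) (div_pos hnum hden)
      have hδhalf : δ ≤ 1/2 := min_le_left _ _
      have hδle : δ * (b * (1 + s)) ≤ b - s + 2 := by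
        have := min_le_right (1/2) ((b - s + 2) / (b * (1 + s)))
        calc δ * (b * (1 + s)) ≤ ((b - s + 2) / (b * (1 + s))) * (b * (1 + s)) := by
              apply mul_le_mul_of_nonneg_right this hden.le
          _ = b - s + 2 := by field_simp
      set a : ℝ := 1 - δ with ha
      have hamem : a ∈ Set.Ico (0:ℝ) 1 := ⟨by simp [ha]; linarith, by simp [ha]; linarith⟩
      have hble := hb ⟨a, hamem, rfl⟩
      have hd : 0 < 3 + a + s * (1 + a) := by simp only [ha]; nlinarith
      rw [le_div_iff₀ hd] at hble
      have : b * (3 + a + s * (1 + a)) > 2 := by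
        have hb3 : (s - 2) * (3 + 2*s) < b * (3 + 2*s) := by
          apply mul_lt_mul_of_pos_right hcon; linarith
        simp only [ha]
        nlinarith
      linarith
end

section
/- For every a ∈ [0,1), the equation (1 − a³)r³ − (1 + 2a)r² − 2r + 1 = 0 has a unique root r_a in (0,1), and this root satisfies 1/3 < r_a < 1/(2 + a). -/
/-- Remark after Theorem 5 of Liu–Ponnusamy, case `p = 2`: for every `a ∈ [0,1)` the
equation `(1-a³)r³ - (1+2a)r² - 2r + 1 = 0` has a unique root `r_a` in `(0,1)`, and
this root satisfies `1/3 < r_a < 1/(2+a)`. -/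
theorem stmt_9 (a : ℝ) (ha : a ∈ Set.Ico (0 : ℝ) 1) :
    ∃ r : ℝ, r ∈ Set.Ioo (0 : ℝ) 1 ∧
      (1 - a ^ 3) * r ^ 3 - (1 + 2 * a) * r ^ 2 - 2 * r + 1 = 0 ∧
      (∀ r' ∈ Set.Ioo (0 : ℝ) 1,
        (1 - a ^ 3) * r' ^ 3 - (1 + 2 * a) * r' ^ 2 - 2 * r' + 1 = 0 → r' = r) ∧
      1 / 3 < r ∧ r < 1 / (2 + a) := by
  obtain ⟨ha0, ha1⟩ := ha
  set f : ℝ → ℝ := fun r => (1 - a ^ 3) * r ^ 3 - (1 + 2 * a) * r ^ 2 - 2 * r + 1 with hf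
  have ha2 : (0:ℝ) < 2 + a := by linarith
  set u : ℝ := 1 / (2 + a) with hu
  have hu_pos : 0 < u := by positivity
  have hu_le : u ≤ 1 / 2 := by
    rw [hu, div_le_div_iff₀ ha2 (by norm_num)]; linarith
  have h13u : (1:ℝ)/3 < u := by
    rw [hu, div_lt_div_iff₀ (by norm_num) ha2]; linarith
  have hfu : f u < 0 := by
    have : f u = (2*a^2 - a - 1) / (2 + a)^3 := by
      rw [hf, hu]; field_simp; ring
    rw [this]
    apply div_neg_of_neg_of_pos
    · nlinarith
    · positivity
  have hf13 : 0 < f (1/3) := by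
    show 0 < (1 - a ^ 3) * (1/3:ℝ) ^ 3 - (1 + 2 * a) * (1/3:ℝ) ^ 2 - 2 * (1/3) + 1
    nlinarith [pow_lt_one₀ ha0 ha1 (by norm_num : 3 ≠ 0)]
  have hcont : ContinuousOn f (Set.Icc (1/3) u) := by
    fun_prop
  have hsub := intermediate_value_Ioo' (le_of_lt h13u) hcont
  have h0mem : (0:ℝ) ∈ Set.Ioo (f u) (f (1/3)) := ⟨hfu, hf13⟩
  obtain ⟨r, hr, hfr⟩ := hsub h0mem
  have hr1 : r < 1 := by linarith [hr.2, hu_le]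
  have hr0 : 0 < r := lt_trans (by norm_num) hr.1
  refine ⟨r, ⟨hr0, hr1⟩, hfr, ?_, hr.1, hr.2⟩
  intro r' ⟨hr'0, hr'1⟩ hfr'
  by_contra hne
  have key : f r' - f r = (r' - r) * ((1 - a^3)*(r'^2 + r'*r + r^2) - (1+2*a)*(r'+r) - 2) := by
    rw [hf]; ring
  have hbr : (1 - a^3)*(r'^2 + r'*r + r^2) - (1+2*a)*(r'+r) - 2 < 0 := by
    nlinarith [mul_pos hr0 hr'0, pow_nonneg ha0 3, mul_pos hr0 (sub_pos.mpr hr1),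
      mul_pos hr'0 (sub_pos.mpr hr'1), mul_pos hr0 (sub_pos.mpr hr'1)]
  have : f r' - f r = 0 := by rw [show f r' = 0 from hfr', hfr]; ring
  rw [key] at this
  rcases mul_eq_zero.mp this with h | h
  · exact hne (by linarith)
  · linarith
end

section
/- Let p ∈ (0,2], let N ≥ 1 be an integer, and let r ∈ (0,1) satisfy 2(1+r)r^N > p(1−r)². Then there exists a ∈ (0,1) such that the Blaschke factor φ_a(z) = (a − z)/(1 − a z), which is analytic on 𝔻 with |φ_a| ≤ 1 and Taylor coefficients a₀ = a, a_k = (a² − 1)a^{k−1} for k ≥ 1, satisfies |φ_a(−r)|^p + Σ_{n=N}^∞ |a_n| r^n = ((r + a)/(1 + r a))^p + (1 − a²)a^{N−1} r^N/(1 − a r) > 1. (Hence the radius R_{N,p} in the refined Bohr inequality |f(z)|^p + Σ_{n=N}^∞ |a_n| r^n ≤ 1 is best possible.) -/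
open Filter Real Topology

set_option maxHeartbeats 1000000 in
/-- Sharpness in Lemma 1 of Liu–Ponnusamy: for `p ∈ (0,2]`, integer `N ≥ 1`, and
`r ∈ (0,1)` with `2(1+r)r^N > p(1-r)²`, there is `a ∈ (0,1)` such that the Blaschke
factor `φ_a(z) = (a-z)/(1-az)` (with `|φ_a| ≤ 1` on `𝔻` and Taylor coefficients
`a₀ = a`, `a_k = (a²-1)a^{k-1}`) satisfies
`|φ_a(-r)|^p + Σ_{n≥N} |a_n| rⁿ = ((r+a)/(1+ra))^p + (1-a²)a^{N-1}r^N/(1-ar) > 1`. -/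
theorem stmt_11 (p : ℝ) (hp0 : 0 < p) (hp2 : p ≤ 2) (N : ℕ) (hN : 1 ≤ N)
    (r : ℝ) (hr0 : 0 < r) (hr1 : r < 1)
    (hcond : p * (1 - r) ^ 2 < 2 * (1 + r) * r ^ N) :
    ∃ a : ℝ, a ∈ Set.Ioo (0 : ℝ) 1 ∧
      (∀ z ∈ Metric.ball (0 : ℂ) 1, ‖((a : ℂ) - z) / (1 - (a : ℂ) * z)‖ ≤ 1) ∧
      ‖((a : ℂ) - (-(r : ℂ))) / (1 - (a : ℂ) * (-(r : ℂ)))‖ ^ p +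
          ∑' n : ℕ, (1 - a ^ 2) * a ^ (N - 1 + n) * r ^ (N + n)
        = ((r + a) / (1 + r * a)) ^ p +
            (1 - a ^ 2) * a ^ (N - 1) * r ^ N / (1 - a * r) ∧
      1 < ((r + a) / (1 + r * a)) ^ p +
            (1 - a ^ 2) * a ^ (N - 1) * r ^ N / (1 - a * r) := by
  have hrN : (0:ℝ) < r ^ N := pow_pos hr0 N
  -- the auxiliary function
  set g : ℝ → ℝ := fun a => (1+a)*a^(N-1)*r^N/(1-a*r) - p*(1-r)/(r+a) with hgdef
  have hg1 : 0 < g 1 := by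
    simp only [hgdef, one_pow, mul_one, one_mul]
    rw [sub_pos, div_lt_div_iff₀ (by linarith) (by linarith)]
    nlinarith
  have hc : ContinuousAt g 1 := by
    apply ContinuousAt.sub
    · apply ContinuousAt.div
      · fun_prop
      · fun_prop
      · simp; intro h; nlinarith
    · apply ContinuousAt.div
      · fun_prop
      · fun_prop
      · intro h; nlinarith [h]
  have hev : ∀ᶠ a in 𝓝 (1:ℝ), 0 < g a :=
    hc.eventually (eventually_gt_nhds hg1)
  have hIoo : Set.Ioo (0:ℝ) 1 ∈ 𝓝[<] (1:ℝ) :=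
    Ioo_mem_nhdsLT_of_mem (by constructor <;> norm_num)
  obtain ⟨a, hga, ha⟩ :=
    ((hev.filter_mono nhdsWithin_le_nhds).and (eventually_of_mem hIoo (fun x hx => hx))).exists
  obtain ⟨ha0, ha1⟩ := ha
  refine ⟨a, ⟨ha0, ha1⟩, ?_, ?_, ?_⟩
  · -- Blaschke factor bounded by 1
    intro z hz
    rw [Metric.mem_ball, dist_zero_right] at hz
    have hzsq : Complex.normSq z < 1 := by
      have : Complex.normSq z = ‖z‖^2 := (Complex.sq_norm z).symm
      rw [this]; nlinarith [norm_nonneg z]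
    have hden : (1 : ℂ) - (a:ℂ) * z ≠ 0 := by
      intro h
      have h1 : (a:ℂ) * z = 1 := by linear_combination -h
      have : ‖(a:ℂ) * z‖ = 1 := by rw [h1]; simp
      rw [norm_mul, Complex.norm_real, Real.norm_eq_abs, abs_of_pos ha0] at this
      nlinarith [norm_nonneg z]
    rw [norm_div, div_le_one (norm_pos_iff.mpr hden)]
    have key : Complex.normSq ((a:ℂ) - z) ≤ Complex.normSq (1 - (a:ℂ) * z) := by
      simp only [Complex.normSq_apply, Complex.sub_re, Complex.sub_im, Complex.mul_re,
        Complex.mul_im, Complex.ofReal_re, Complex.ofReal_im, Complex.one_re, Complex.one_im,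
        Complex.normSq_apply] at *
      nlinarith [mul_nonneg (by nlinarith : (0:ℝ) ≤ 1 - a*a)
        (by nlinarith : (0:ℝ) ≤ 1 - (z.re*z.re + z.im*z.im))]
    calc ‖(a:ℂ) - z‖ = Real.sqrt (Complex.normSq ((a:ℂ) - z)) := by
            rw [Complex.norm_def]
      _ ≤ Real.sqrt (Complex.normSq (1 - (a:ℂ) * z)) := Real.sqrt_le_sqrt key
      _ = ‖1 - (a:ℂ) * z‖ := by rw [Complex.norm_def]
  · -- equality of the two expressions
    have har : a * r < 1 := by nlinarith
    have hnorm : ‖((a : ℂ) - (-(r : ℂ))) / (1 - (a : ℂ) * (-(r : ℂ)))‖ = (r + a) / (1 + r * a) := by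
      have : ((a : ℂ) - (-(r : ℂ))) / (1 - (a : ℂ) * (-(r : ℂ)))
          = (((r + a) / (1 + r * a) : ℝ) : ℂ) := by
        push_cast
        rw [div_eq_div_iff]
        · ring
        · intro h
          have h2 : ((1 + a*r : ℝ) : ℂ) = 0 := by push_cast; linear_combination h
          have := Complex.ofReal_eq_zero.mp h2
          nlinarith
        · intro h
          have h2 : ((1 + r*a : ℝ) : ℂ) = 0 := by push_cast; linear_combination h
          have := Complex.ofReal_eq_zero.mp h2
          nlinarith
      rw [this, Complex.norm_real, Real.norm_eq_abs, abs_of_pos]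
      apply div_pos <;> nlinarith
    rw [hnorm]
    congr 1
    have hfun : ∀ n : ℕ, (1 - a ^ 2) * a ^ (N - 1 + n) * r ^ (N + n)
        = ((1 - a ^ 2) * a ^ (N - 1) * r ^ N) * (a * r) ^ n := by
      intro n; rw [pow_add, pow_add, mul_pow]; ring
    calc ∑' n : ℕ, (1 - a ^ 2) * a ^ (N - 1 + n) * r ^ (N + n)
        = ∑' n : ℕ, ((1 - a ^ 2) * a ^ (N - 1) * r ^ N) * (a * r) ^ n := by
          exact tsum_congr hfun
      _ = ((1 - a ^ 2) * a ^ (N - 1) * r ^ N) * (1 - a * r)⁻¹ := by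
          rw [tsum_mul_left, tsum_geometric_of_lt_one (by positivity) har]
      _ = (1 - a ^ 2) * a ^ (N - 1) * r ^ N / (1 - a * r) := by
          rw [div_eq_mul_inv]
  · -- strict inequality
    have har : a * r < 1 := by nlinarith
    have h1ar : (0:ℝ) < 1 - a * r := by linarith
    have hra : (0:ℝ) < r + a := by linarith
    have h1ra : (0:ℝ) < 1 + r * a := by nlinarith
    set X : ℝ := (r + a) / (1 + r * a) with hXdef
    have hX0 : 0 < X := div_pos hra h1ra
    have hlog : 1 - 1/X ≤ Real.log X := by
      have h := Real.log_le_sub_one_of_pos (x := X⁻¹) (by positivity)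
      rw [Real.log_inv] at h
      have hinv : 1/X = X⁻¹ := one_div X
      rw [hinv]; linarith
    have hrpow : 1 + p * Real.log X ≤ X ^ p := by
      rw [Real.rpow_def_of_pos hX0, mul_comm (Real.log X) p]
      linarith [Real.add_one_le_exp (p * Real.log X)]
    have hmul : p * (1 - 1/X) ≤ p * Real.log X :=
      mul_le_mul_of_nonneg_left hlog hp0.le
    have h1X : 1/X = (1 + r * a) / (r + a) := by
      rw [hXdef, one_div, inv_div]
    have haN : (0:ℝ) < a ^ (N - 1) := pow_pos ha0 _
    have hkey : p * (1/X - 1) < (1 - a^2) * a^(N-1) * r^N / (1 - a*r) := by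
      rw [h1X]
      have hga' : p*(1-r)/(r+a) < (1+a)*a^(N-1)*r^N/(1-a*r) := by
        have := hga; simp only [hgdef] at this; linarith
      have hm : (1-a) * (p*(1-r)/(r+a)) < (1-a) * ((1+a)*a^(N-1)*r^N/(1-a*r)) :=
        mul_lt_mul_of_pos_left hga' (by linarith)
      have e1 : p * ((1 + r * a)/(r + a) - 1) = (1-a) * (p*(1-r)/(r+a)) := by
        field_simp; ring
      have e2 : (1-a) * ((1+a)*a^(N-1)*r^N/(1-a*r)) = (1 - a^2) * a^(N-1) * r^N / (1 - a*r) := by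
        rw [← mul_div_assoc,
          show (1-a)*((1+a)*a^(N-1)*r^N) = (1 - a^2) * a^(N-1) * r^N by ring]
      rw [e1, ← e2]; exact hm
    have : 1 + p * (1 - 1/X) ≤ X ^ p := le_trans (by linarith) hrpow
    linarith
end

section
/- Let a ∈ [0,1), p > 0, and r ∈ [0,1), and let φ_a(z) = (a − z)/(1 − a z) be the Blaschke factor with Taylor coefficients a₀ = a and a_k = (a² − 1)a^{k−1} for k ≥ 1. Then |φ_a(−r)|^p + Σ_{k=1}^∞ |a_k| r^k + (1/(1+a) + r/(1−r)) · Σ_{k=1}^∞ |a_k|² r^{2k} = ((r + a)/(1 + r a))^p + (1 − a²)·r/(1 − r) = 1 − A_{a,p}(r)/((1 − r)(1 + a r)^p). In particular this quantity exceeds 1 whenever A_{a,p}(r) < 0. -/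
/-- Sharpness computation in Lemma 3 of Liu–Ponnusamy: for the Blaschke factor
`φ_a(z) = (a-z)/(1-az)` with coefficients `a₀ = a`, `a_k = (a²-1)a^{k-1}` (`k ≥ 1`),
`a ∈ [0,1)`, `p > 0`, `r ∈ [0,1)`:
`|φ_a(-r)|^p + Σ_{k≥1} |a_k| r^k + (1/(1+a) + r/(1-r)) Σ_{k≥1} |a_k|² r^{2k}
  = ((r+a)/(1+ra))^p + (1-a²)r/(1-r) = 1 - A_{a,p}(r)/((1-r)(1+ar)^p)`,
and this quantity exceeds `1` whenever `A_{a,p}(r) < 0`. -/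
theorem stmt_14 (a p r : ℝ) (ha0 : 0 ≤ a) (ha1 : a < 1) (hp : 0 < p)
    (hr0 : 0 ≤ r) (hr1 : r < 1) (φ : ℂ → ℂ)
    (hφ : ∀ z : ℂ, φ z = ((a : ℂ) - z) / (1 - (a : ℂ) * z)) :
    ‖φ (-(r : ℂ))‖ ^ p + (∑' k : ℕ, (1 - a ^ 2) * a ^ k * r ^ (k + 1)) +
        (1 / (1 + a) + r / (1 - r)) *
          ∑' k : ℕ, ((1 - a ^ 2) * a ^ k) ^ 2 * r ^ (2 * (k + 1))
      = ((r + a) / (1 + r * a)) ^ p + (1 - a ^ 2) * r / (1 - r) ∧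
    ((r + a) / (1 + r * a)) ^ p + (1 - a ^ 2) * r / (1 - r)
      = 1 - ((1 - (2 - a ^ 2) * r) * (1 + a * r) ^ p - (1 - r) * (r + a) ^ p) /
          ((1 - r) * (1 + a * r) ^ p) ∧
    ((1 - (2 - a ^ 2) * r) * (1 + a * r) ^ p - (1 - r) * (r + a) ^ p < 0 →
      1 < ‖φ (-(r : ℂ))‖ ^ p + (∑' k : ℕ, (1 - a ^ 2) * a ^ k * r ^ (k + 1)) +
        (1 / (1 + a) + r / (1 - r)) *
          ∑' k : ℕ, ((1 - a ^ 2) * a ^ k) ^ 2 * r ^ (2 * (k + 1))) := by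
  have har : a * r < 1 := by nlinarith
  have har0 : 0 ≤ a * r := mul_nonneg ha0 hr0
  have hden1 : (1:ℝ) - a*r ≠ 0 := by nlinarith
  have hden2 : (1:ℝ) + a ≠ 0 := by nlinarith
  have hden3 : (1:ℝ) - r ≠ 0 := by nlinarith
  have hden4 : (1:ℝ) - (a*r)^2 ≠ 0 := by nlinarith [sq_nonneg (a*r)]
  have hpos : (0:ℝ) < 1 + a*r := by nlinarith
  have hs1 : (∑' k : ℕ, (1 - a ^ 2) * a ^ k * r ^ (k + 1)) = (1-a^2)*r/(1-a*r) := by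
    have h : ∀ k : ℕ, (1 - a ^ 2) * a ^ k * r ^ (k + 1) = ((1-a^2)*r) * (a*r)^k := by
      intro k; rw [mul_pow, pow_succ]; ring
    simp_rw [h]
    rw [tsum_mul_left, tsum_geometric_of_lt_one har0 har]
    field_simp
  have hs2 : (∑' k : ℕ, ((1 - a ^ 2) * a ^ k) ^ 2 * r ^ (2 * (k + 1)))
      = (1-a^2)^2*r^2/(1-(a*r)^2) := by
    have h2 : (a*r)^2 < 1 := by nlinarith
    have h20 : (0:ℝ) ≤ (a*r)^2 := sq_nonneg _
    have h : ∀ k : ℕ, ((1 - a ^ 2) * a ^ k) ^ 2 * r ^ (2 * (k + 1))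
        = ((1-a^2)^2*r^2) * ((a*r)^2)^k := by
      intro k; ring
    simp_rw [h]
    rw [tsum_mul_left, tsum_geometric_of_lt_one h20 h2]
    field_simp
  have hc' : ((1:ℂ) + (a:ℂ) * (r:ℂ)) ≠ 0 := by
    have : ((1+a*r:ℝ):ℂ) ≠ 0 := Complex.ofReal_ne_zero.mpr hpos.ne'
    push_cast at this; exact this
  have hc1 : (1:ℂ) - (a:ℂ) * (-(r:ℂ)) ≠ 0 := by
    rw [show (1:ℂ) - (a:ℂ)*(-(r:ℂ)) = 1 + (a:ℂ)*(r:ℂ) by ring]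
    exact hc'
  have heq : φ (-(r:ℂ)) = (((a+r)/(1+a*r) : ℝ) : ℂ) := by
    rw [hφ]
    push_cast
    field_simp
    rw [show (1:ℂ) - -((a:ℂ)*(r:ℂ)) = 1 + (a:ℂ)*(r:ℂ) by ring,
      show ((a:ℂ) - -(r:ℂ)) = (a:ℂ)+(r:ℂ) by ring, mul_div_assoc, div_self hc', mul_one]
  have hφval : ‖φ (-(r : ℂ))‖ = (r+a)/(1+r*a) := by
    rw [heq, Complex.norm_real, Real.norm_of_nonneg (by positivity),
      show (a+r)/(1+a*r) = (r+a)/(1+r*a) by ring]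
  have halg : (1-a^2)*r/(1-a*r) + (1/(1+a)+r/(1-r))*((1-a^2)^2*r^2/(1-(a*r)^2))
      = (1-a^2)*r/(1-r) := by
    have hden5 : (1:ℝ) - a^2*r^2 ≠ 0 := by rw [← mul_pow]; exact hden4
    field_simp
    ring
  have hEq1 : ‖φ (-(r : ℂ))‖ ^ p + (∑' k : ℕ, (1 - a ^ 2) * a ^ k * r ^ (k + 1)) +
        (1 / (1 + a) + r / (1 - r)) *
          ∑' k : ℕ, ((1 - a ^ 2) * a ^ k) ^ 2 * r ^ (2 * (k + 1))
      = ((r + a) / (1 + r * a)) ^ p + (1 - a ^ 2) * r / (1 - r) := by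
    rw [hφval, hs1, hs2]
    linarith
  have hX : (0:ℝ) < (1 + a*r) ^ p := Real.rpow_pos_of_pos hpos p
  have hYX : ((r+a)/(1+r*a)) ^ p = (r+a)^p / (1+a*r)^p := by
    rw [show (1+r*a) = (1+a*r) by ring, Real.div_rpow (by linarith) hpos.le]
  have hEq2 : ((r + a) / (1 + r * a)) ^ p + (1 - a ^ 2) * r / (1 - r)
      = 1 - ((1 - (2 - a ^ 2) * r) * (1 + a * r) ^ p - (1 - r) * (r + a) ^ p) /
          ((1 - r) * (1 + a * r) ^ p) := by
    rw [hYX]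
    field_simp
    ring
  refine ⟨hEq1, hEq2, fun hA => ?_⟩
  rw [hEq1, hEq2]
  have hd : (0:ℝ) < (1 - r) * (1 + a*r)^p := by
    apply mul_pos (by linarith) hX
  have : ((1 - (2 - a ^ 2) * r) * (1 + a * r) ^ p - (1 - r) * (r + a) ^ p) /
      ((1 - r) * (1 + a * r) ^ p) < 0 := div_neg_of_neg_of_pos hA hd
  linarith
end

section
/- Let a = 1/√2 and let ψ(z) = z(a − z)/(1 − a z), which is analytic on 𝔻 with |ψ(z)| < 1 on 𝔻, ψ(0) = 0, and Taylor coefficients a₁ = a, a_n = (a² − 1)a^{n−2} for n ≥ 2. Then for every r with 1/√2 < r < 1, Σ_{n=1}^∞ |a_n| r^n = a r + (1 − a²) r²/(1 − a r) = (r/√2)/(1 − r/√2) > 1. (Hence the radius 1/√2 in Bombieri's inequality Σ_{n=1}^∞ |a_n| r^n ≤ 1 for f with f(0) = 0 is best possible.) -/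
lemma aux_sq : ((Real.sqrt 2)⁻¹) ^ 2 = 1 / 2 := by
  rw [← Real.sqrt_inv]
  rw [Real.sq_sqrt] <;> norm_num

lemma aux_pos : (0:ℝ) < (Real.sqrt 2)⁻¹ := by positivity

lemma aux_lt_one : (Real.sqrt 2)⁻¹ < 1 := by
  rw [inv_lt_one_iff₀]
  right
  nlinarith [Real.sq_sqrt (by norm_num : (2:ℝ) ≥ 0), Real.sqrt_nonneg 2]

/-- Sharpness of Bombieri's radius `1/√2` (used in Theorem 2 of Liu–Ponnusamy):
with `a = 1/√2`, the function `ψ(z) = z(a-z)/(1-az)` is analytic on `𝔻` with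
`|ψ| < 1` and `ψ(0) = 0`, and for every `r` with `1/√2 < r < 1` its coefficient
series satisfies
`Σ_{n≥1} |aₙ| rⁿ = a r + (1-a²) r²/(1-ar) = (r/√2)/(1 - r/√2) > 1`. -/
theorem stmt_15 (ψ : ℂ → ℂ)
    (hψ : ∀ z : ℂ,
      ψ z = z * ((((Real.sqrt 2)⁻¹ : ℝ) : ℂ) - z) /
        (1 - (((Real.sqrt 2)⁻¹ : ℝ) : ℂ) * z))
    (r : ℝ) (hr1 : (Real.sqrt 2)⁻¹ < r) (hr2 : r < 1) :
    DifferentiableOn ℂ ψ (Metric.ball (0 : ℂ) 1) ∧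
    (∀ z ∈ Metric.ball (0 : ℂ) 1, ‖ψ z‖ < 1) ∧
    ψ 0 = 0 ∧
    (Real.sqrt 2)⁻¹ * r +
        (∑' n : ℕ, (1 - ((Real.sqrt 2)⁻¹) ^ 2) * ((Real.sqrt 2)⁻¹) ^ n * r ^ (n + 2))
      = (Real.sqrt 2)⁻¹ * r +
          (1 - ((Real.sqrt 2)⁻¹) ^ 2) * r ^ 2 / (1 - (Real.sqrt 2)⁻¹ * r) ∧
    (Real.sqrt 2)⁻¹ * r +
        (1 - ((Real.sqrt 2)⁻¹) ^ 2) * r ^ 2 / (1 - (Real.sqrt 2)⁻¹ * r)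
      = (r / Real.sqrt 2) / (1 - r / Real.sqrt 2) ∧
    1 < (r / Real.sqrt 2) / (1 - r / Real.sqrt 2) := by
  set a : ℝ := (Real.sqrt 2)⁻¹ with ha
  have ha2 : a ^ 2 = 1 / 2 := aux_sq
  have hapos : 0 < a := aux_pos
  have ha1 : a < 1 := aux_lt_one
  have hrpos : 0 < r := lt_trans hapos hr1
  have har : a * r < 1 := by nlinarith
  have har' : 0 < 1 - a * r := by linarith
  -- denominators nonzero on the ball
  have hden : ∀ z ∈ Metric.ball (0 : ℂ) 1, (1 - (a : ℂ) * z) ≠ 0 := by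
    intro z hz
    have hz1 : ‖z‖ < 1 := by simpa using hz
    have : ‖(a : ℂ) * z‖ < 1 := by
      rw [norm_mul, Complex.norm_real]
      calc ‖a‖ * ‖z‖ ≤ 1 * ‖z‖ := by
            apply mul_le_mul_of_nonneg_right _ (norm_nonneg z)
            rw [Real.norm_eq_abs, abs_of_pos hapos]; exact ha1.le
        _ < 1 := by simpa using hz1
    intro h
    have he : (a : ℂ) * z = 1 := by linear_combination -h
    rw [he] at this
    simp at this
  refine ⟨?_, ?_, ?_, ?_, ?_, ?_⟩
  · -- differentiability
    have : DifferentiableOn ℂ (fun z => z * ((a : ℂ) - z) / (1 - (a : ℂ) * z))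
        (Metric.ball (0 : ℂ) 1) := by
      apply DifferentiableOn.div
      · fun_prop
      · fun_prop
      · exact hden
    exact this.congr (fun z _ => hψ z)
  · intro z hz
    have hz1 : ‖z‖ < 1 := by simpa using hz
    rw [hψ z]
    have hnum : ‖(a : ℂ) - z‖ ≤ ‖1 - (a : ℂ) * z‖ := by
      have h1 : Complex.normSq ((a : ℂ) - z) ≤ Complex.normSq (1 - (a : ℂ) * z) := by
        have hzsq : z.re ^ 2 + z.im ^ 2 < 1 := by
          have h2 : Complex.normSq z < 1 := by
            rw [← Complex.sq_norm]
            have habs : ‖z‖ < 1 := hz1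
            nlinarith [norm_nonneg z]
          have h3 := Complex.normSq_apply z
          nlinarith
        simp [Complex.normSq_apply, Complex.sub_re, Complex.sub_im, Complex.mul_re,
          Complex.mul_im, Complex.ofReal_re, Complex.ofReal_im]
        nlinarith [hzsq, ha2]
      calc ‖(a : ℂ) - z‖ = Real.sqrt (Complex.normSq ((a : ℂ) - z)) := by
            rw [Complex.norm_def]
        _ ≤ Real.sqrt (Complex.normSq (1 - (a : ℂ) * z)) := Real.sqrt_le_sqrt h1
        _ = ‖1 - (a : ℂ) * z‖ := by rw [Complex.norm_def]
    have hdpos : 0 < ‖1 - (a : ℂ) * z‖ := norm_pos_iff.mpr (hden z hz)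
    rw [norm_div, norm_mul]
    rw [div_lt_one hdpos]
    calc ‖z‖ * ‖(a : ℂ) - z‖ ≤ ‖z‖ * ‖1 - (a : ℂ) * z‖ := by
          apply mul_le_mul_of_nonneg_left hnum (norm_nonneg z)
      _ < 1 * ‖1 - (a : ℂ) * z‖ := by
          apply mul_lt_mul_of_pos_right hz1 hdpos
      _ = ‖1 - (a : ℂ) * z‖ := one_mul _
  · rw [hψ 0]; simp
  · congr 1
    have hterm : ∀ n : ℕ, (1 - a ^ 2) * a ^ n * r ^ (n + 2)
        = ((1 - a ^ 2) * r ^ 2) * (a * r) ^ n := by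
      intro n; rw [mul_pow]; ring
    rw [tsum_congr hterm, tsum_mul_left, tsum_geometric_of_lt_one (by positivity) har]
    rw [div_eq_mul_inv]
  · have hdiv : r / Real.sqrt 2 = a * r := by rw [ha]; ring
    rw [hdiv]
    have e1 : (1 - a ^ 2) * r ^ 2 = (a * r) ^ 2 := by rw [mul_pow, ha2]; norm_num
    rw [e1]
    have hne : 1 - a * r ≠ 0 := ne_of_gt har'
    field_simp
    ring
  · have h2 : 0 < 1 - r / Real.sqrt 2 := by
      rw [div_eq_mul_inv, mul_comm]; linarith
    rw [lt_div_iff₀ h2]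
    have : a < r / Real.sqrt 2 * 2 := by
      rw [div_eq_mul_inv]
      calc a < r := hr1
        _ = r * (Real.sqrt 2)⁻¹ * Real.sqrt 2 := by
            field_simp
        _ ≤ r * (Real.sqrt 2)⁻¹ * 2 := by
            apply mul_le_mul_of_nonneg_left _ (by positivity)
            nlinarith [Real.mul_self_sqrt (by norm_num : (2:ℝ) ≥ 0), Real.sqrt_nonneg 2]
    -- 1 < r/√2 / (1 - r/√2)  ⟺  1 - r/√2 < r/√2 ⟺ 1 < 2 r/√2 = r√2, and r > 1/√2 means r√2>1
    have hr1' : 1 < r * Real.sqrt 2 := by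
      have hs : (0:ℝ) < Real.sqrt 2 := Real.sqrt_pos.mpr (by norm_num)
      calc (1:ℝ) = (Real.sqrt 2)⁻¹ * Real.sqrt 2 := by field_simp
        _ < r * Real.sqrt 2 := by apply mul_lt_mul_of_pos_right hr1 hs
    have hs : (0:ℝ) < Real.sqrt 2 := Real.sqrt_pos.mpr (by norm_num)
    have hs2 : Real.sqrt 2 * Real.sqrt 2 = 2 := Real.mul_self_sqrt (by norm_num)
    rw [div_eq_mul_inv]
    nlinarith [hr1', hs, hs2]
end

section
/- Let p > 1 and a ∈ [0,1]. Then the function Φ(r) = (1 + r)² (r + a)^{p−1}/(1 + r a)^{p+1} is nondecreasing on [0,1); in particular Φ(r) ≥ Φ(0) = a^{p−1} for all r ∈ [0,1). -/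
/-- Auxiliary monotonicity lemma of Liu–Ponnusamy: for `p > 1` and `a ∈ [0,1]`, the
function `Φ(r) = (1+r)² (r+a)^(p-1) / (1+ra)^(p+1)` is nondecreasing on `[0,1)`;
in particular `Φ(r) ≥ Φ(0) = a^(p-1)` for all `r ∈ [0,1)`. -/
theorem stmt_16 (p a : ℝ) (hp : 1 < p) (ha : a ∈ Set.Icc (0 : ℝ) 1) :
    MonotoneOn (fun r : ℝ => (1 + r) ^ 2 * (r + a) ^ (p - 1) / (1 + r * a) ^ (p + 1))
      (Set.Ico (0 : ℝ) 1) ∧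
    ∀ r ∈ Set.Ico (0 : ℝ) 1,
      a ^ (p - 1) ≤ (1 + r) ^ 2 * (r + a) ^ (p - 1) / (1 + r * a) ^ (p + 1) := by
  obtain ⟨ha0, ha1⟩ := ha
  -- rewrite Φ as a product of two monotone nonneg factors
  have hrew : ∀ r ∈ Set.Ico (0:ℝ) 1,
      (1 + r) ^ 2 * (r + a) ^ (p - 1) / (1 + r * a) ^ (p + 1)
        = ((1 + r) / (1 + r * a)) ^ 2 * ((r + a) / (1 + r * a)) ^ (p - 1) := by
    intro r hr
    obtain ⟨hr0, hr1⟩ := hr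
    have hden : (0:ℝ) < 1 + r * a := by nlinarith
    have hnum : (0:ℝ) ≤ r + a := by linarith
    rw [div_pow, Real.div_rpow hnum hden.le]
    rw [div_mul_div_comm]
    congr 1
    have h2 : ((1 + r * a) ^ (2:ℕ) : ℝ) = (1 + r * a) ^ ((2:ℕ):ℝ) := by
      rw [Real.rpow_natCast]
    rw [h2, ← Real.rpow_add hden]
    congr 1
    push_cast
    ring
  have hmono : MonotoneOn (fun r : ℝ => (1 + r) ^ 2 * (r + a) ^ (p - 1) / (1 + r * a) ^ (p + 1))
      (Set.Ico (0 : ℝ) 1) := by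
    intro x hx y hy hxy
    obtain ⟨hx0, hx1⟩ := hx
    obtain ⟨hy0, hy1⟩ := hy
    have hdx : (0:ℝ) < 1 + x * a := by nlinarith
    have hdy : (0:ℝ) < 1 + y * a := by nlinarith
    simp only
    rw [hrew x ⟨hx0, hx1⟩, hrew y ⟨hy0, hy1⟩]
    have h1 : (1 + x) / (1 + x * a) ≤ (1 + y) / (1 + y * a) := by
      rw [div_le_div_iff₀ hdx hdy]; nlinarith
    have h2 : (x + a) / (1 + x * a) ≤ (y + a) / (1 + y * a) := by
      rw [div_le_div_iff₀ hdx hdy]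
      nlinarith [mul_nonneg (sub_nonneg.2 hxy) (by nlinarith : (0:ℝ) ≤ 1 - a*a)]
    have hf1 : (0:ℝ) ≤ (1 + x) / (1 + x * a) := by positivity
    have hf2 : (0:ℝ) ≤ (x + a) / (1 + x * a) := by
      apply div_nonneg (by linarith) hdx.le
    have hg2 : (0:ℝ) ≤ (y + a) / (1 + y * a) := by
      apply div_nonneg (by linarith) hdy.le
    have e1 : ((1 + x) / (1 + x * a)) ^ 2 ≤ ((1 + y) / (1 + y * a)) ^ 2 :=
      pow_le_pow_left₀ hf1 h1 2
    have e2 : ((x + a) / (1 + x * a)) ^ (p - 1) ≤ ((y + a) / (1 + y * a)) ^ (p - 1) :=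
      Real.rpow_le_rpow hf2 h2 (by linarith)
    exact mul_le_mul e1 e2 (Real.rpow_nonneg hf2 _) (by positivity)
  refine ⟨hmono, fun r hr => ?_⟩
  have h0 : (0:ℝ) ∈ Set.Ico (0:ℝ) 1 := by norm_num
  have := hmono h0 hr hr.1
  simpa [Real.one_rpow] using this
end

section
/- Let p ∈ (0,2], let N ≥ 1 be an integer, let a ∈ [0,1], and let r ∈ [0,1) satisfy 2(1+r)r^N ≤ p(1−r)². Then ((r + a)/(1 + r a))^p + (1 − a²) r^N/(1 − r) ≤ 1. -/
open Real

lemma key_rpow (t p : ℝ) (ht0 : 0 ≤ t) (ht1 : t ≤ 1) (hp0 : 0 < p) (hp2 : p ≤ 2) :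
    t ^ p ≤ 1 - p / 2 * (1 - t ^ 2) := by
  have h1 : t ^ p = (t ^ 2) ^ (p / 2) := by
    rw [← Real.rpow_natCast t 2, ← Real.rpow_mul ht0]
    congr 1; ring
  have h2 : ((1 : ℝ) + (t ^ 2 - 1)) ^ (p / 2) ≤ 1 + p / 2 * (t ^ 2 - 1) :=
    rpow_one_add_le_one_add_mul_self (by nlinarith) (by linarith) (by linarith)
  rw [h1]
  have : (1 : ℝ) + (t ^ 2 - 1) = t ^ 2 := by ring
  rw [this] at h2
  linarith

/-- The scalar core of Lemma 1 of Liu–Ponnusamy: for `p ∈ (0,2]`, an integer `N ≥ 1`,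
`a ∈ [0,1]` and `r ∈ [0,1)` with `2(1+r)r^N ≤ p(1-r)²`, one has
`((r+a)/(1+ra))^p + (1-a²) r^N/(1-r) ≤ 1`. -/
theorem stmt_18 (p : ℝ) (hp0 : 0 < p) (hp2 : p ≤ 2) (N : ℕ) (hN : 1 ≤ N)
    (a : ℝ) (ha : a ∈ Set.Icc (0 : ℝ) 1) (r : ℝ) (hr0 : 0 ≤ r) (hr1 : r < 1)
    (hcond : 2 * (1 + r) * r ^ N ≤ p * (1 - r) ^ 2) :
    ((r + a) / (1 + r * a)) ^ p + (1 - a ^ 2) * r ^ N / (1 - r) ≤ 1 := by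
  obtain ⟨ha0, ha1⟩ := ha
  have hden : (0 : ℝ) < 1 + r * a := by nlinarith
  set A : ℝ := (r + a) / (1 + r * a) with hA
  have hA0 : 0 ≤ A := div_nonneg (by linarith) hden.le
  have hA1 : A ≤ 1 := by
    rw [hA, div_le_one hden]; nlinarith
  have hkey := key_rpow A p hA0 hA1 hp0 hp2
  have hs : (0 : ℝ) ≤ r ^ N := pow_nonneg hr0 N
  have hr1' : (0 : ℝ) < 1 - r := by linarith
  -- 1 - A^2 = (1-r^2)(1-a^2)/(1+ra)^2
  have hA2 : 1 - A ^ 2 = (1 - r ^ 2) * (1 - a ^ 2) / (1 + r * a) ^ 2 := by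
    rw [hA, div_pow]
    field_simp
    ring
  -- main estimate: (1-a²) r^N / (1-r) ≤ p/2 * (1 - A²)
  have hmain : (1 - a ^ 2) * r ^ N / (1 - r) ≤ p / 2 * (1 - A ^ 2) := by
    have hR : p / 2 * ((1 - r ^ 2) * (1 - a ^ 2) / (1 + r * a) ^ 2)
        = p * (1 - r ^ 2) * (1 - a ^ 2) / (2 * (1 + r * a) ^ 2) := by
      field_simp
    rw [hA2, hR, div_le_div_iff₀ hr1' (by positivity)]
    have hra : r * a ≤ r := mul_le_of_le_one_right hr0 ha1
    have h1 : (1 + r * a) ^ 2 ≤ (1 + r) ^ 2 := by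
      apply pow_le_pow_left₀ (by linarith) (by linarith)
    have h2 : (0 : ℝ) ≤ 1 - a ^ 2 := by nlinarith
    nlinarith [mul_le_mul_of_nonneg_left hcond (mul_nonneg h2 (by linarith : (0:ℝ) ≤ 1 + r)),
      mul_le_mul_of_nonneg_left h1 (by positivity : (0:ℝ) ≤ 2 * ((1 - a ^ 2) * r ^ N))]
  linarith
end
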